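/- arXiv:1508.07206 — 7 statements merged into one kernel-verified Lean document; each statement's English description precedes it below -/
import Mathlib

section
/- Let R be a finite commutative local ring with maximal ideal m. Write r = #R and m' = #m. Then the cardinality of the group GL₂(R) of invertible 2×2 matrices over R is (r² − m'²)·r·(r − m'). -/
open Matrix

section aux
variable (R : Type*) [CommRing R] [IsLocalRing R] [Fintype R]

open IsLocalRing

local instance : Finite (ResidueField R) :=
  Finite.of_surjective (residue R) residue_surjective

noncomputable local instance : Fintype (ResidueField R) := Fintype.ofFinite _

lemma aux_surj : Function.Surjective (Matrix.GeneralLinearGroup.map (n := Fin 2) (residue R)) := by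
  intro N
  choose g hg using fun i j => residue_surjective (R := R) (N.val i j)
  have hdet : IsUnit ((Matrix.of g).det) := by
    apply isUnit_of_map_unit (residue R)
    have h : (residue R) (Matrix.of g).det = N.val.det := by
      rw [RingHom.map_det]
      congr 1
      ext i j
      simpa using hg i j
    rw [h]
    exact (Matrix.isUnit_iff_isUnit_det _).mp N.isUnit
  have hM : IsUnit (Matrix.of g) := (Matrix.isUnit_iff_isUnit_det _).mpr hdet
  refine ⟨hM.unit, ?_⟩
  ext i j
  simp only [Matrix.GeneralLinearGroup.map, Units.coe_map, RingHom.toMonoidHom_eq_coe,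
    MonoidHom.coe_coe, RingHom.mapMatrix_apply, IsUnit.unit_spec, Matrix.map_apply]
  exact hg i j

lemma aux_isUnit (A : Fin 2 → Fin 2 → maximalIdeal R) :
    IsUnit (1 + Matrix.of (fun i j => (A i j : R))) := by
  rw [Matrix.isUnit_iff_isUnit_det]
  apply isUnit_of_map_unit (residue R)
  have h : (residue R) (1 + Matrix.of (fun i j => (A i j : R))).det =
      (1 : Matrix (Fin 2) (Fin 2) (ResidueField R)).det := by
    rw [RingHom.map_det]
    congr 1
    ext i j
    have : residue R (A i j : R) = 0 := Ideal.Quotient.eq_zero_iff_mem.mpr (A i j).2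
    simp [Matrix.one_apply, this, apply_ite (residue R)]
  rw [h]
  simp

noncomputable def auxEquiv :
    (Matrix.GeneralLinearGroup.map (n := Fin 2) (residue R)).ker ≃
      (Fin 2 → Fin 2 → maximalIdeal R) where
  toFun M i j := ⟨M.val.val i j - (1 : Matrix (Fin 2) (Fin 2) R) i j, by
    have h : (residue R) (M.val.val i j) = (1 : Matrix (Fin 2) (Fin 2) (ResidueField R)) i j := by
      have h2 := M.2
      rw [MonoidHom.mem_ker] at h2
      have h3 := congrArg (fun (N : GL (Fin 2) (ResidueField R)) => (N : Matrix (Fin 2) (Fin 2) (ResidueField R)) i j) h2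
      simpa [Matrix.GeneralLinearGroup.map] using h3
    rw [← Ideal.Quotient.eq_zero_iff_mem]
    show residue R _ = 0
    rw [map_sub, h]
    by_cases hij : i = j <;> simp [Matrix.one_apply, hij]⟩
  invFun A := ⟨(aux_isUnit R A).unit, by
    rw [MonoidHom.mem_ker]
    ext i j
    simp only [Matrix.GeneralLinearGroup.map, Units.coe_map, RingHom.toMonoidHom_eq_coe,
      MonoidHom.coe_coe, RingHom.mapMatrix_apply, IsUnit.unit_spec, Matrix.map_apply,
      Units.val_one]
    have : residue R (A i j : R) = 0 := Ideal.Quotient.eq_zero_iff_mem.mpr (A i j).2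
    simp [Matrix.one_apply, this, apply_ite (residue R)]⟩
  left_inv M := by
    apply Subtype.ext
    apply Units.ext
    show (aux_isUnit R _).unit.val = M.val.val
    rw [IsUnit.unit_spec]
    ext i j
    simp [Matrix.add_apply]
  right_inv A := by
    funext i j
    apply Subtype.ext
    show (aux_isUnit R A).unit.val i j - (1 : Matrix (Fin 2) (Fin 2) R) i j = (A i j : R)
    rw [IsUnit.unit_spec]
    simp [Matrix.add_apply]

lemma aux_card_R :
    Nat.card R = Nat.card (maximalIdeal R) * Nat.card (ResidueField R) := by
  have := AddSubgroup.card_eq_card_quotient_mul_card_addSubgroup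
    ((maximalIdeal R).toAddSubgroup)
  rw [this, mul_comm]
  congr 1

lemma nat_arith (a q : ℕ) :
    (q ^ 2 - q ^ 0) * (q ^ 2 - q ^ 1) * a ^ 4 =
      ((a * q) ^ 2 - a ^ 2) * (a * q) * (a * q - a) := by
  have h1 : (a * q) ^ 2 - a ^ 2 = a ^ 2 * (q ^ 2 - 1) := by
    rw [Nat.mul_sub, mul_one, mul_pow]
  have h2 : a * q - a = a * (q - 1) := by rw [Nat.mul_sub, mul_one]
  have h3 : q ^ 2 - q ^ 1 = q * (q - 1) := by
    rw [Nat.mul_sub, mul_one, pow_one, sq]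
  rw [h1, h2, h3, pow_zero]
  generalize q ^ 2 - 1 = x
  generalize q - 1 = y
  ring

end aux

/-- Cardinality of `GL₂` over a finite commutative local ring `R`:
if `r = #R` and `m' = #m` (the maximal ideal), then
`#GL₂(R) = (r² − m'²) · r · (r − m')`. -/
theorem stmt_0 (R : Type*) [CommRing R] [IsLocalRing R] [Fintype R] :
    Nat.card (GL (Fin 2) R) =
      (Nat.card R ^ 2 - Nat.card (IsLocalRing.maximalIdeal R) ^ 2) * Nat.card R *
        (Nat.card R - Nat.card (IsLocalRing.maximalIdeal R)) := by
  haveI : Finite (IsLocalRing.ResidueField R) :=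
    Finite.of_surjective (IsLocalRing.residue R) IsLocalRing.residue_surjective
  letI : Fintype (IsLocalRing.ResidueField R) := Fintype.ofFinite _
  set f := Matrix.GeneralLinearGroup.map (n := Fin 2) (IsLocalRing.residue R) with hf
  have hker : Nat.card f.ker = Nat.card (IsLocalRing.maximalIdeal R) ^ 4 := by
    rw [Nat.card_congr (auxEquiv R)]
    simp only [Nat.card_pi, Finset.prod_const, Finset.card_univ, Fintype.card_fin]
    ring
  have hcard : Nat.card (GL (Fin 2) R) =
      Nat.card (GL (Fin 2) (IsLocalRing.ResidueField R)) * Nat.card f.ker := by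
    rw [Subgroup.card_eq_card_quotient_mul_card_subgroup f.ker]
    congr 1
    exact Nat.card_congr (QuotientGroup.quotientKerEquivOfSurjective f (aux_surj R)).toEquiv
  rw [hcard, hker, Matrix.card_GL_field, aux_card_R R, ← Nat.card_eq_fintype_card,
    Fin.prod_univ_two]
  exact nat_arith _ _
end

section
/- Let ℓ be an odd prime, k a positive integer, and D an integer that is a quadratic nonresidue modulo ℓ. Let R_k = (ℤ/ℓᵏℤ)[X]/(X² − D) and let 𝒜_{ℓᵏ,I} = {σ ∈ GL₂(R_k) | det σ lies in the image of (ℤ/ℓᵏℤ)^× in R_k}. Then #𝒜_{ℓᵏ,I} = ℓ^{7k−5}(ℓ⁴ − 1)(ℓ − 1). -/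
open Matrix Polynomial

/-- The ring `R_k = (ℤ/ℓᵏℤ)[X]/(X² − D)`. -/
abbrev InertRing (ℓ k : ℕ) (D : ℤ) : Type :=
  AdjoinRoot ((X : Polynomial (ZMod (ℓ ^ k))) ^ 2 - C (D : ZMod (ℓ ^ k)))

section FiberCount

variable {G K : Type*}

/-- Fibered equivalence for a surjective group hom. -/
noncomputable def fiberEquiv [Group G] [Group K] (f : G →* K) (hf : Function.Surjective f)
    (S : Set K) : {g : G // f g ∈ S} ≃ S × {g : G // f g = 1} := by
  choose s hs using hf
  exact
  { toFun := fun g => (⟨f g.1, g.2⟩, ⟨g.1 * (s (f g.1))⁻¹, by simp [_root_.map_mul, hs]⟩)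
    invFun := fun p => ⟨p.2.1 * s p.1.1, by
      have h : f (p.2.1 * s p.1.1) = p.1.1 := by rw [_root_.map_mul, p.2.2, one_mul, hs]
      rw [h]; exact p.1.2⟩
    left_inv := fun g => by
      apply Subtype.ext
      simp
    right_inv := fun p => by
      obtain ⟨⟨x, hxS⟩, ⟨g, hg⟩⟩ := p
      have hfg : f (g * s x) = x := by rw [_root_.map_mul, hg, one_mul, hs]
      refine Prod.ext ?_ ?_ <;> apply Subtype.ext <;> simp [hfg] }

theorem card_fiber [Group G] [Group K] (f : G →* K) (hf : Function.Surjective f) (S : Set K) :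
    Nat.card {g : G // f g ∈ S} = Nat.card S * Nat.card {g : G // f g = 1} := by
  rw [Nat.card_congr (fiberEquiv f hf S), Nat.card_prod]

theorem card_total [Group G] [Group K] (f : G →* K) (hf : Function.Surjective f) :
    Nat.card G = Nat.card K * Nat.card {g : G // f g = 1} := by
  have h := card_fiber f hf Set.univ
  rwa [Nat.card_congr (Equiv.subtypeUnivEquiv fun g => Set.mem_univ (f g)), Nat.card_univ] at h

/-- Additive fibered counting. -/
noncomputable def addFiberEquiv [AddGroup G] [AddGroup K] (f : G →+ K)
    (hf : Function.Surjective f) :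
    G ≃ K × {g : G // f g = 0} := by
  choose s hs using hf
  exact
  { toFun := fun g => (f g, ⟨g - s (f g), by simp [_root_.map_sub, hs]⟩)
    invFun := fun p => p.2.1 + s p.1
    left_inv := fun g => by simp
    right_inv := fun p => by
      obtain ⟨x, ⟨g, hg⟩⟩ := p
      have hfg : f (g + s x) = x := by rw [_root_.map_add, hg, zero_add, hs]
      refine Prod.ext ?_ ?_ <;> simp [hfg] }

theorem add_card_total [AddGroup G] [AddGroup K] (f : G →+ K) (hf : Function.Surjective f) :
    Nat.card G = Nat.card K * Nat.card {g : G // f g = 0} := by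
  rw [Nat.card_congr (addFiberEquiv f hf), Nat.card_prod]

end FiberCount

section QuadRing

variable {A : Type*} [CommRing A] [Nontrivial A] (d : A)

theorem quad_monic : ((X : A[X]) ^ 2 - C d).Monic :=
  monic_X_pow_sub_C d two_ne_zero

theorem quad_decomp (x : AdjoinRoot ((X : A[X]) ^ 2 - C d)) :
    ∃ a b : A, x = AdjoinRoot.of _ a + AdjoinRoot.of _ b * AdjoinRoot.root _ := by
  obtain ⟨p, rfl⟩ := AdjoinRoot.mk_surjective x
  set q : A[X] := X ^ 2 - C d with hq
  have hm : q.Monic := quad_monic d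
  refine ⟨(p %ₘ q).coeff 0, (p %ₘ q).coeff 1, ?_⟩
  have h1 : AdjoinRoot.mk q p = AdjoinRoot.mk q (p %ₘ q) := by
    conv_rhs => rw [modByMonic_eq_sub_mul_div p q]
    rw [_root_.map_sub, _root_.map_mul, AdjoinRoot.mk_self, zero_mul, sub_zero]
  rw [h1]
  have hd : (p %ₘ q).degree ≤ 1 := by
    have h2 := degree_modByMonic_lt p hm
    rw [hq, degree_X_pow_sub_C (by norm_num)] at h2
    exact Order.le_of_lt_succ (by exact_mod_cast h2)
  conv_lhs => rw [eq_X_add_C_of_degree_le_one hd]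
  rw [_root_.map_add, _root_.map_mul, AdjoinRoot.mk_C, AdjoinRoot.mk_C, AdjoinRoot.mk_X]
  ring

theorem quad_unique {a b : A}
    (h : AdjoinRoot.of ((X : A[X]) ^ 2 - C d) a +
      AdjoinRoot.of _ b * AdjoinRoot.root _ = 0) : a = 0 ∧ b = 0 := by
  set q : A[X] := X ^ 2 - C d with hq
  have hm : q.Monic := quad_monic d
  have hmk : AdjoinRoot.mk q (C a + C b * X) = 0 := by
    rw [_root_.map_add, _root_.map_mul, AdjoinRoot.mk_C, AdjoinRoot.mk_C, AdjoinRoot.mk_X]; exact h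
  rw [AdjoinRoot.mk_eq_zero] at hmk
  obtain ⟨t, ht⟩ := hmk
  have h0 : C a + C b * X = 0 := by
    by_cases ht0 : t = 0
    · rw [ht, ht0, mul_zero]
    · exfalso
      have hdeg : (C a + C b * X).degree ≤ 1 := by
        rw [add_comm]; exact degree_linear_le
      have h2 : q.degree ≤ (C a + C b * X).degree := by
        rw [ht, mul_comm, hm.degree_mul]
        exact le_add_of_nonneg_left (zero_le_degree_iff.mpr ht0)
      have h3 : q.degree = 2 := by rw [hq]; exact degree_X_pow_sub_C (by norm_num) d
      rw [h3] at h2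
      have := h2.trans hdeg
      norm_num at this
  constructor
  · have := congrArg (fun p => coeff p 0) h0
    simpa using this
  · have := congrArg (fun p => coeff p 1) h0
    simpa using this

/-- `A × A ≃ A[√d]`. -/
noncomputable def quadEquiv : A × A ≃ AdjoinRoot ((X : A[X]) ^ 2 - C d) := by
  refine Equiv.ofBijective
    (fun p => AdjoinRoot.of _ p.1 + AdjoinRoot.of _ p.2 * AdjoinRoot.root _) ⟨?_, ?_⟩
  · rintro ⟨a, b⟩ ⟨a', b'⟩ hab
    simp only at hab
    have h : AdjoinRoot.of ((X : A[X]) ^ 2 - C d) (a - a') +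
        AdjoinRoot.of _ (b - b') * AdjoinRoot.root _ = 0 := by
      simp only [_root_.map_sub]
      rw [sub_mul]
      rw [show AdjoinRoot.of ((X : A[X]) ^ 2 - C d) a - AdjoinRoot.of _ a' +
        (AdjoinRoot.of _ b * AdjoinRoot.root _ - AdjoinRoot.of _ b' * AdjoinRoot.root _) =
        (AdjoinRoot.of _ a + AdjoinRoot.of _ b * AdjoinRoot.root _) -
        (AdjoinRoot.of _ a' + AdjoinRoot.of _ b' * AdjoinRoot.root _) by ring]
      rw [hab, sub_self]
    obtain ⟨h1, h2⟩ := quad_unique d h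
    have : a = a' := by linear_combination h1
    have : b = b' := by linear_combination h2
    simp_all
  · intro x
    obtain ⟨a, b, hab⟩ := quad_decomp d x
    exact ⟨(a, b), hab.symm⟩

end QuadRing

section ResHom

private noncomputable abbrev Fq (ℓ : ℕ) (D : ℤ) : Type :=
  AdjoinRoot ((X : Polynomial (ZMod ℓ)) ^ 2 - C (D : ZMod ℓ))

/-- Reduction mod `ℓ` from `R_k` to `F_{ℓ²}`. -/
private noncomputable def resHom (ℓ k : ℕ) (D : ℤ) (hk : k ≠ 0) :
    InertRing ℓ k D →+* Fq ℓ D :=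
  AdjoinRoot.lift ((AdjoinRoot.of _).comp (ZMod.castHom (dvd_pow_self ℓ hk) (ZMod ℓ)))
    (AdjoinRoot.root _) (by
      have h : (AdjoinRoot.root ((X : Polynomial (ZMod ℓ)) ^ 2 - C (D : ZMod ℓ))) ^ 2
          - AdjoinRoot.of _ ((D : ZMod ℓ)) = 0 := by
        rw [← AdjoinRoot.mk_X, ← AdjoinRoot.mk_C, ← map_pow, ← _root_.map_sub,
          AdjoinRoot.mk_self]
      rw [eval₂_sub, eval₂_pow, eval₂_X, eval₂_C, RingHom.comp_apply,
        map_intCast (ZMod.castHom (dvd_pow_self ℓ hk) (ZMod ℓ)) D]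
      exact h)

private theorem resHom_of (ℓ k : ℕ) (D : ℤ) (hk : k ≠ 0) (a : ZMod (ℓ ^ k)) :
    resHom ℓ k D hk (AdjoinRoot.of _ a) =
      AdjoinRoot.of _ (ZMod.castHom (dvd_pow_self ℓ hk) (ZMod ℓ) a) := by
  simp [resHom, AdjoinRoot.lift_of]

private theorem resHom_root (ℓ k : ℕ) (D : ℤ) (hk : k ≠ 0) :
    resHom ℓ k D hk (AdjoinRoot.root _) = AdjoinRoot.root _ :=
  AdjoinRoot.lift_root _

end ResHom

set_option maxHeartbeats 1600000 in
/-- For an odd prime `ℓ`, `k ≥ 1` and `D` a quadratic nonresidue modulo `ℓ`,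
the set `𝒜_{ℓᵏ,I}` of `σ ∈ GL₂(R_k)` whose determinant lies in the image of
`(ℤ/ℓᵏℤ)ˣ` has cardinality `ℓ^(7k−5)(ℓ⁴ − 1)(ℓ − 1)`. -/
theorem stmt_2 (ℓ k : ℕ) (hℓ : ℓ.Prime) (hodd : ℓ ≠ 2) (hk : 1 ≤ k) (D : ℤ)
    (hD : ¬ IsSquare (D : ZMod ℓ)) :
    Nat.card {σ : GL (Fin 2) (InertRing ℓ k D) |
        ∃ u : (ZMod (ℓ ^ k))ˣ,
          (σ : Matrix (Fin 2) (Fin 2) (InertRing ℓ k D)).det =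
            algebraMap (ZMod (ℓ ^ k)) (InertRing ℓ k D) (u : ZMod (ℓ ^ k))} =
      ℓ ^ (7 * k - 5) * (ℓ ^ 4 - 1) * (ℓ - 1) := by
  obtain ⟨m, rfl⟩ : ∃ m, k = m + 1 := ⟨k - 1, by omega⟩
  haveI : Fact ℓ.Prime := ⟨hℓ⟩
  have hℓ2 : 2 ≤ ℓ := hℓ.two_le
  haveI : NeZero ℓ := ⟨by omega⟩
  haveI : NeZero (ℓ ^ (m + 1)) := ⟨pow_ne_zero _ (by omega)⟩
  haveI : Fact (1 < ℓ ^ (m + 1)) :=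
    ⟨lt_of_lt_of_le hℓ.one_lt (Nat.le_self_pow (Nat.succ_ne_zero m) ℓ)⟩
  haveI : Fact (Irreducible ((X : Polynomial (ZMod ℓ)) ^ 2 - C (D : ZMod ℓ))) := by
    refine ⟨X_pow_sub_C_irreducible_of_prime Nat.prime_two (fun b hb => hD ⟨b, ?_⟩)⟩
    rw [← hb]; ring
  haveI : Finite (InertRing ℓ (m + 1) D) :=
    Finite.of_equiv _ (quadEquiv ((D : ZMod (ℓ ^ (m + 1)))))
  haveI : Finite (Fq ℓ D) := Finite.of_equiv _ (quadEquiv ((D : ZMod ℓ)))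
  set π := resHom ℓ (m + 1) D (Nat.succ_ne_zero m) with hπdef
  have hπ_of : ∀ a, π (AdjoinRoot.of _ a) =
      AdjoinRoot.of _ (ZMod.castHom (dvd_pow_self ℓ (Nat.succ_ne_zero m)) (ZMod ℓ) a) :=
    resHom_of ℓ (m + 1) D (Nat.succ_ne_zero m)
  have hπ_root : π (AdjoinRoot.root _) = AdjoinRoot.root _ :=
    resHom_root ℓ (m + 1) D (Nat.succ_ne_zero m)
  -- surjectivity of π
  have hπsurj : Function.Surjective π := by
    intro y
    obtain ⟨a, b, rfl⟩ := quad_decomp ((D : ZMod ℓ)) y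
    obtain ⟨a', ha⟩ := ZMod.ringHom_surjective
      (ZMod.castHom (dvd_pow_self ℓ (Nat.succ_ne_zero m)) (ZMod ℓ)) a
    obtain ⟨b', hb⟩ := ZMod.ringHom_surjective
      (ZMod.castHom (dvd_pow_self ℓ (Nat.succ_ne_zero m)) (ZMod ℓ)) b
    exact ⟨AdjoinRoot.of _ a' + AdjoinRoot.of _ b' * AdjoinRoot.root _, by
      rw [_root_.map_add, _root_.map_mul, hπ_of, hπ_of, hπ_root, ha, hb]⟩
  -- elements of the kernel are multiples of ℓ
  have hdvd : ∀ a : ZMod (ℓ ^ (m + 1)),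
      ZMod.castHom (dvd_pow_self ℓ (Nat.succ_ne_zero m)) (ZMod ℓ) a = 0 →
      ∃ a' : ZMod (ℓ ^ (m + 1)), a = (ℓ : ZMod (ℓ ^ (m + 1))) * a' := by
    intro a ha
    obtain ⟨n, rfl⟩ := ZMod.natCast_zmod_surjective a
    rw [map_natCast] at ha
    obtain ⟨t, rfl⟩ := (ZMod.natCast_eq_zero_iff n ℓ).mp ha
    exact ⟨(t : ZMod (ℓ ^ (m + 1))), by push_cast; ring⟩
  have hℓpow : ((ℓ : InertRing ℓ (m + 1) D)) ^ (m + 1) = 0 := by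
    have h1 : ((ℓ : InertRing ℓ (m + 1) D)) ^ (m + 1)
        = ((ℓ ^ (m + 1) : ℕ) : InertRing ℓ (m + 1) D) := by push_cast; ring
    rw [h1, show ((ℓ ^ (m + 1) : ℕ) : InertRing ℓ (m + 1) D) =
      algebraMap (ZMod (ℓ ^ (m + 1))) (InertRing ℓ (m + 1) D)
        ((ℓ ^ (m + 1) : ℕ) : ZMod (ℓ ^ (m + 1))) from (map_natCast _ _).symm,
      ZMod.natCast_self, map_zero]
  have hnil : ∀ x : InertRing ℓ (m + 1) D, π x = 0 → IsNilpotent x := by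
    intro x hx
    obtain ⟨a, b, rfl⟩ := quad_decomp ((D : ZMod (ℓ ^ (m + 1)))) x
    rw [_root_.map_add, _root_.map_mul, hπ_of, hπ_of, hπ_root] at hx
    obtain ⟨ha, hb⟩ := quad_unique _ hx
    obtain ⟨a', rfl⟩ := hdvd a ha
    obtain ⟨b', rfl⟩ := hdvd b hb
    refine ⟨m + 1, ?_⟩
    have hof : AdjoinRoot.of ((X : Polynomial (ZMod (ℓ ^ (m + 1)))) ^ 2
        - C (D : ZMod (ℓ ^ (m + 1)))) ((ℓ : ZMod (ℓ ^ (m + 1))))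
        = (ℓ : InertRing ℓ (m + 1) D) := map_natCast _ _
    have hx2 : AdjoinRoot.of _ ((ℓ : ZMod (ℓ ^ (m + 1))) * a')
        + AdjoinRoot.of _ ((ℓ : ZMod (ℓ ^ (m + 1))) * b') * AdjoinRoot.root _
        = (ℓ : InertRing ℓ (m + 1) D)
          * (AdjoinRoot.of _ a' + AdjoinRoot.of _ b' * AdjoinRoot.root _) := by
      rw [_root_.map_mul, _root_.map_mul, hof]; ring
    rw [hx2, mul_pow, hℓpow, zero_mul]
  -- x is a unit iff π x ≠ 0
  have hunit : ∀ x : InertRing ℓ (m + 1) D, IsUnit x ↔ π x ≠ 0 := by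
    intro x
    constructor
    · intro h h0
      have h2 := h.map π
      rw [h0] at h2
      exact not_isUnit_zero h2
    · intro h0
      obtain ⟨y, hy⟩ := hπsurj (π x)⁻¹
      have h1 : π (x * y - 1) = 0 := by
        rw [_root_.map_sub, _root_.map_mul, hy, mul_inv_cancel₀ h0, _root_.map_one, sub_self]
      have h2 : IsUnit (x * y) := by
        have h3 := (hnil _ h1).isUnit_one_add
        rwa [show 1 + (x * y - 1) = x * y by ring] at h3
      exact isUnit_of_mul_isUnit_left h2
  -- cardinalities of R, F, ker π
  have cardR : Nat.card (InertRing ℓ (m + 1) D) = ℓ ^ (2 * m + 2) := by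
    have h := Nat.card_congr (quadEquiv ((D : ZMod (ℓ ^ (m + 1))))).symm
    rw [Nat.card_prod, Nat.card_zmod] at h
    rw [h]; ring
  have cardF : Nat.card (Fq ℓ D) = ℓ ^ 2 := by
    have h := Nat.card_congr (quadEquiv ((D : ZMod ℓ))).symm
    rw [Nat.card_prod, Nat.card_zmod] at h
    rw [h]; ring
  have cardK1 : Nat.card {x : InertRing ℓ (m + 1) D // π x = 0} = ℓ ^ (2 * m) := by
    have h : Nat.card (InertRing ℓ (m + 1) D)
        = Nat.card (Fq ℓ D) * Nat.card {x : InertRing ℓ (m + 1) D // π x = 0} :=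
      add_card_total π.toAddMonoidHom hπsurj
    rw [cardR, cardF] at h
    refine (Nat.eq_of_mul_eq_mul_left (show 0 < ℓ ^ 2 by positivity) ?_).symm
    rw [← h]; ring
  have cardU : Nat.card (InertRing ℓ (m + 1) D)ˣ = ℓ ^ (2 * m + 2) - ℓ ^ (2 * m) := by
    classical
    haveI : Fintype (InertRing ℓ (m + 1) D) := Fintype.ofFinite _
    have e : (InertRing ℓ (m + 1) D)ˣ ≃ {x : InertRing ℓ (m + 1) D // ¬ (π x = 0)} :=
      { toFun := fun u => ⟨↑u, (hunit _).mp u.isUnit⟩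
        invFun := fun x => ((hunit _).mpr x.2).unit
        left_inv := fun u => by
          apply Units.ext
          simp
        right_inv := fun x => by
          apply Subtype.ext
          simp }
    rw [Nat.card_congr e, Nat.card_eq_fintype_card, Fintype.card_subtype_compl,
      ← Nat.card_eq_fintype_card, ← Nat.card_eq_fintype_card, cardR, cardK1]
  -- the reduction map on GL₂
  set Φ : GL (Fin 2) (InertRing ℓ (m + 1) D) →* GL (Fin 2) (Fq ℓ D) :=
    Units.map (π.mapMatrix (m := Fin 2)).toMonoidHom with hΦdef
  have hΦsurj : Function.Surjective Φ := by
    intro B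
    choose M hM using fun i j => hπsurj ((↑B : Matrix (Fin 2) (Fin 2) (Fq ℓ D)) i j)
    have hmap : (Matrix.of M).map π = (↑B : Matrix (Fin 2) (Fin 2) (Fq ℓ D)) := by
      ext i j; exact hM i j
    have hdet : IsUnit (Matrix.of M).det := by
      rw [hunit]
      have h1 : π (Matrix.of M).det = (↑B : Matrix (Fin 2) (Fin 2) (Fq ℓ D)).det := by
        rw [RingHom.map_det, RingHom.mapMatrix_apply, hmap]
      rw [h1]
      exact ((isUnit_iff_isUnit_det _).mp B.isUnit).ne_zero
    have hMunit : IsUnit (Matrix.of M) := (isUnit_iff_isUnit_det _).mpr hdet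
    refine ⟨hMunit.unit, Units.ext ?_⟩
    show π.mapMatrix (↑hMunit.unit : Matrix (Fin 2) (Fin 2) (InertRing ℓ (m + 1) D))
      = (↑B : Matrix (Fin 2) (Fin 2) (Fq ℓ D))
    rw [IsUnit.unit_spec, RingHom.mapMatrix_apply, hmap]
  -- kernel of Φ
  have cardKΦ : Nat.card {g : GL (Fin 2) (InertRing ℓ (m + 1) D) // Φ g = 1} = ℓ ^ (8 * m) := by
    have hone : ∀ i j, π ((1 : Matrix (Fin 2) (Fin 2) (InertRing ℓ (m + 1) D)) i j) =
        (1 : Matrix (Fin 2) (Fin 2) (Fq ℓ D)) i j := by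
      intro i j
      by_cases h : i = j <;> simp [Matrix.one_apply, h]
    have key : ∀ N : Fin 2 → Fin 2 → {x : InertRing ℓ (m + 1) D // π x = 0},
        IsUnit (1 + Matrix.of (fun i j => ((N i j : InertRing ℓ (m + 1) D)))) ∧
        π.mapMatrix (1 + Matrix.of (fun i j => ((N i j : InertRing ℓ (m + 1) D)))) = 1 := by
      intro N
      have hmap : π.mapMatrix
          (1 + Matrix.of (fun i j => ((N i j : InertRing ℓ (m + 1) D)))) = 1 := by
        ext i j
        simp only [RingHom.mapMatrix_apply, Matrix.map_apply, Matrix.add_apply, _root_.map_add,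
          Matrix.of_apply]
        rw [(N i j).2, add_zero, hone i j]
      refine ⟨?_, hmap⟩
      rw [isUnit_iff_isUnit_det, hunit]
      rw [RingHom.map_det, hmap, det_one]
      exact one_ne_zero
    have e : {g : GL (Fin 2) (InertRing ℓ (m + 1) D) // Φ g = 1} ≃
        (Fin 2 → Fin 2 → {x : InertRing ℓ (m + 1) D // π x = 0}) :=
      { toFun := fun g => fun i j =>
          ⟨(↑g.1 : Matrix (Fin 2) (Fin 2) (InertRing ℓ (m + 1) D)) i j
            - (1 : Matrix (Fin 2) (Fin 2) (InertRing ℓ (m + 1) D)) i j, by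
            have hg : π.mapMatrix (↑g.1 : Matrix (Fin 2) (Fin 2) (InertRing ℓ (m + 1) D)) = 1 :=
              congrArg Units.val g.2
            have h1 : π ((↑g.1 : Matrix (Fin 2) (Fin 2) (InertRing ℓ (m + 1) D)) i j)
                = (1 : Matrix (Fin 2) (Fin 2) (Fq ℓ D)) i j := by
              rw [← hg]; rfl
            rw [_root_.map_sub, h1, hone, sub_self]⟩
        invFun := fun N => ⟨(key N).1.unit, by
          apply Units.ext
          show π.mapMatrix (↑(key N).1.unit : Matrix (Fin 2) (Fin 2) (InertRing ℓ (m + 1) D))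
            = (↑(1 : GL (Fin 2) (Fq ℓ D)) : Matrix (Fin 2) (Fin 2) (Fq ℓ D))
          rw [IsUnit.unit_spec, (key N).2, Units.val_one]⟩
        left_inv := fun g => by
          apply Subtype.ext
          apply Units.ext
          rw [IsUnit.unit_spec]
          ext i j
          simp only [Matrix.add_apply, Matrix.of_apply]
          ring
        right_inv := fun N => by
          funext i j
          apply Subtype.ext
          show (↑(key N).1.unit : Matrix (Fin 2) (Fin 2) (InertRing ℓ (m + 1) D)) i j
            - (1 : Matrix (Fin 2) (Fin 2) (InertRing ℓ (m + 1) D)) i j = ↑(N i j)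
          rw [IsUnit.unit_spec]
          simp only [Matrix.add_apply, Matrix.of_apply]
          ring }
    rw [Nat.card_congr e, Nat.card_fun, Nat.card_fun, cardK1,
      Nat.card_eq_fintype_card, Fintype.card_fin]
    ring
  -- cardinality of GL₂(F)
  haveI : Fintype (Fq ℓ D) := Fintype.ofFinite _
  have hcardFq : Fintype.card (Fq ℓ D) = ℓ ^ 2 := by
    rw [← Nat.card_eq_fintype_card]; exact cardF
  have cardGLF : Nat.card (GL (Fin 2) (Fq ℓ D)) = (ℓ ^ 4 - 1) * (ℓ ^ 4 - ℓ ^ 2) := by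
    rw [Matrix.card_GL_field 2, hcardFq, Fin.prod_univ_two]
    norm_num [← pow_mul]
  have cardGLR : Nat.card (GL (Fin 2) (InertRing ℓ (m + 1) D))
      = ((ℓ ^ 4 - 1) * (ℓ ^ 4 - ℓ ^ 2)) * ℓ ^ (8 * m) := by
    have h := card_total Φ hΦsurj
    rw [cardGLF, cardKΦ] at h
    exact h
  -- determinant is surjective
  have hdetsurj : Function.Surjective
      (Matrix.GeneralLinearGroup.det :
        GL (Fin 2) (InertRing ℓ (m + 1) D) →* (InertRing ℓ (m + 1) D)ˣ) := by
    intro u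
    have hmul1 : Matrix.diagonal ![(↑u : InertRing ℓ (m + 1) D), 1]
        * Matrix.diagonal ![(↑u⁻¹ : InertRing ℓ (m + 1) D), 1] = 1 := by
      rw [Matrix.diagonal_mul_diagonal]
      have h : (fun i => (![(↑u : InertRing ℓ (m + 1) D), 1] i
          * ![(↑u⁻¹ : InertRing ℓ (m + 1) D), 1] i)) = fun _ => (1 : InertRing ℓ (m + 1) D) := by
        funext i; fin_cases i <;> simp
      rw [h]
      exact Matrix.diagonal_one
    have hmul2 : Matrix.diagonal ![(↑u⁻¹ : InertRing ℓ (m + 1) D), 1]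
        * Matrix.diagonal ![(↑u : InertRing ℓ (m + 1) D), 1] = 1 := by
      rw [Matrix.diagonal_mul_diagonal]
      have h : (fun i => (![(↑u⁻¹ : InertRing ℓ (m + 1) D), 1] i
          * ![(↑u : InertRing ℓ (m + 1) D), 1] i)) = fun _ => (1 : InertRing ℓ (m + 1) D) := by
        funext i; fin_cases i <;> simp
      rw [h]
      exact Matrix.diagonal_one
    refine ⟨⟨_, _, hmul1, hmul2⟩, Units.ext ?_⟩
    show (Matrix.diagonal ![(↑u : InertRing ℓ (m + 1) D), 1]).det = ↑u
    rw [Matrix.det_diagonal]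
    simp [Fin.prod_univ_two]
  -- the subgroup H
  have hinj : Function.Injective
      (algebraMap (ZMod (ℓ ^ (m + 1))) (InertRing ℓ (m + 1) D)) := by
    intro a b hab
    rw [AdjoinRoot.algebraMap_eq] at hab
    have h : AdjoinRoot.of ((X : Polynomial (ZMod (ℓ ^ (m + 1)))) ^ 2
        - C (D : ZMod (ℓ ^ (m + 1)))) (a - b)
        + AdjoinRoot.of ((X : Polynomial (ZMod (ℓ ^ (m + 1)))) ^ 2
          - C (D : ZMod (ℓ ^ (m + 1)))) (0 : ZMod (ℓ ^ (m + 1)))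
          * AdjoinRoot.root ((X : Polynomial (ZMod (ℓ ^ (m + 1)))) ^ 2
          - C (D : ZMod (ℓ ^ (m + 1)))) = 0 := by
      rw [map_zero, zero_mul, add_zero, _root_.map_sub, hab, sub_self]
    exact sub_eq_zero.mp (quad_unique _ h).1
  have hinjU : Function.Injective
      (Units.map (algebraMap (ZMod (ℓ ^ (m + 1))) (InertRing ℓ (m + 1) D)).toMonoidHom) := by
    intro u v huv
    apply Units.ext
    apply hinj
    have h := congrArg Units.val huv
    simpa using h
  have cardH : Nat.card
      (Units.map (algebraMap (ZMod (ℓ ^ (m + 1))) (InertRing ℓ (m + 1) D)).toMonoidHom).range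
      = ℓ ^ m * (ℓ - 1) := by
    rw [← Nat.card_congr (MonoidHom.ofInjective hinjU).toEquiv, Nat.card_eq_fintype_card,
      ZMod.card_units_eq_totient, Nat.totient_prime_pow hℓ (Nat.succ_pos m)]
    simp
  -- identify the set in the statement with a det-preimage
  have hsetcard : Nat.card {σ : GL (Fin 2) (InertRing ℓ (m + 1) D) |
      ∃ u : (ZMod (ℓ ^ (m + 1)))ˣ,
        (σ : Matrix (Fin 2) (Fin 2) (InertRing ℓ (m + 1) D)).det =
          algebraMap (ZMod (ℓ ^ (m + 1))) (InertRing ℓ (m + 1) D) (u : ZMod (ℓ ^ (m + 1)))}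
      = Nat.card {σ : GL (Fin 2) (InertRing ℓ (m + 1) D) //
          Matrix.GeneralLinearGroup.det σ ∈
            ((Units.map (algebraMap (ZMod (ℓ ^ (m + 1)))
              (InertRing ℓ (m + 1) D)).toMonoidHom).range :
                Set ((InertRing ℓ (m + 1) D)ˣ))} := by
    apply Nat.card_congr
    refine Equiv.subtypeEquivRight (fun σ => ?_)
    simp only [Set.mem_setOf_eq, SetLike.mem_coe, MonoidHom.mem_range]
    constructor
    · rintro ⟨u, hu⟩
      refine ⟨u, Units.ext ?_⟩
      simpa using hu.symm
    · rintro ⟨u, hu⟩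
      refine ⟨u, ?_⟩
      have h := congrArg Units.val hu
      simpa using h.symm
  -- assemble the count
  have main1 := card_fiber
    (Matrix.GeneralLinearGroup.det :
      GL (Fin 2) (InertRing ℓ (m + 1) D) →* (InertRing ℓ (m + 1) D)ˣ) hdetsurj
    (((Units.map (algebraMap (ZMod (ℓ ^ (m + 1)))
        (InertRing ℓ (m + 1) D)).toMonoidHom).range : Set ((InertRing ℓ (m + 1) D)ˣ)))
  have main2 := card_total
    (Matrix.GeneralLinearGroup.det :
      GL (Fin 2) (InertRing ℓ (m + 1) D) →* (InertRing ℓ (m + 1) D)ˣ) hdetsurj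
  set N := Nat.card {g : GL (Fin 2) (InertRing ℓ (m + 1) D) //
    Matrix.GeneralLinearGroup.det g = 1} with hNdef
  rw [cardGLR, cardU] at main2
  have hUpos : 0 < ℓ ^ (2 * m + 2) - ℓ ^ (2 * m) := by
    have h := Nat.pow_lt_pow_right hℓ.one_lt (show 2 * m < 2 * m + 2 by omega)
    omega
  have hNval : N = ℓ ^ (6 * m + 2) * (ℓ ^ 4 - 1) := by
    apply Nat.eq_of_mul_eq_mul_left hUpos
    rw [← main2]
    have h1 : ℓ ^ (2 * m) ≤ ℓ ^ (2 * m + 2) := Nat.pow_le_pow_right (by omega) (by omega)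
    have h2 : 1 ≤ ℓ ^ 4 := Nat.one_le_pow _ _ (by omega)
    have h3 : ℓ ^ 2 ≤ ℓ ^ 4 := Nat.pow_le_pow_right (by omega) (by omega)
    zify [h1, h2, h3]
    ring
  have hHcoe : Nat.card (((Units.map (algebraMap (ZMod (ℓ ^ (m + 1)))
      (InertRing ℓ (m + 1) D)).toMonoidHom).range : Set ((InertRing ℓ (m + 1) D)ˣ)))
      = ℓ ^ m * (ℓ - 1) := by
    rw [SetLike.coe_sort_coe]
    exact cardH
  rw [hsetcard, main1, hHcoe, hNval, show 7 * (m + 1) - 5 = 7 * m + 2 by omega]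
  ring
end

section
/- Let T, Φ and T_ε be as follows: T = {(x,y) ∈ ℝ² | y + 2 > |2x| and 4y < x² + 8}, Φ(x,y) = (1/(2π²))·√((y − 2x + 2)(y + 2x + 2)/(x² − 4y + 8)), and T_ε = {(x,y) ∈ T | √(x²/4 − y + 2) < ε}. For 0 < ε < 2 let T²_ε = {(x,y) ∈ T_ε | 4 − 2ε < x < 4}. Then 2·∫_{T²_ε} Φ(x,y) dx dy = O(ε²) as ε → 0⁺; that is, there exist C > 0 and ε₀ > 0 such that 2·∫_{T²_ε} Φ ≤ C·ε² for all 0 < ε < ε₀. -/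
open MeasureTheory Real Filter Set

/-- The region `T_ε ⊆ T` of the plane. -/
def Teps (ε : ℝ) : Set (ℝ × ℝ) :=
  {p : ℝ × ℝ | (p.2 + 2 > |2 * p.1| ∧ 4 * p.2 < p.1 ^ 2 + 8) ∧
    Real.sqrt (p.1 ^ 2 / 4 - p.2 + 2) < ε}

/-- The region `T²_ε = {(x,y) ∈ T_ε | 4 − 2ε < x < 4}`. -/
def Teps2 (ε : ℝ) : Set (ℝ × ℝ) :=
  {p : ℝ × ℝ | p ∈ Teps ε ∧ 4 - 2 * ε < p.1 ∧ p.1 < 4}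

/-- The density `Φ` on `T`. -/
noncomputable def Phi (p : ℝ × ℝ) : ℝ :=
  (1 / (2 * π ^ 2)) *
    Real.sqrt ((p.2 - 2 * p.1 + 2) * (p.2 + 2 * p.1 + 2) / (p.1 ^ 2 - 4 * p.2 + 8))

lemma key_ioo (a b c : ℝ) (hac : a ≤ c) :
    ∫⁻ y in Set.Ioo a b, ENNReal.ofReal ((2 * Real.sqrt (c - y))⁻¹) ≤
      ENNReal.ofReal (Real.sqrt (c - a)) := by
  have hsub : Set.Ioo a b ⊆ Set.Ioo a c ∪ Set.Ici c := by
    intro y hy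
    rcases lt_or_ge y c with h | h
    · exact Or.inl ⟨hy.1, h⟩
    · exact Or.inr h
  have hzero : ∫⁻ y in Set.Ici c, ENNReal.ofReal ((2 * Real.sqrt (c - y))⁻¹) = 0 := by
    have hf0 : ∀ y ∈ Set.Ici c, ENNReal.ofReal ((2 * Real.sqrt (c - y))⁻¹) = (0 : ENNReal) := by
      intro y hy
      have h0 : Real.sqrt (c - y) = 0 := Real.sqrt_eq_zero'.mpr (by simp at hy; linarith)
      simp [h0]
    rw [setLIntegral_congr_fun measurableSet_Ici hf0,
      lintegral_zero]
  -- equality on Ioo a c with the rpow function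
  have heq : Set.EqOn (fun y => (2 * Real.sqrt (c - y))⁻¹)
      (fun y => 2⁻¹ * (c - y) ^ (-(1/2) : ℝ)) (Set.Ioo a c) := by
    intro y hy
    have ht : (0:ℝ) < c - y := by simp at hy ⊢; linarith [hy.2]
    have h1 : Real.sqrt (c - y) = (c - y) ^ ((1:ℝ)/2) := Real.sqrt_eq_rpow _
    simp only [mul_inv, h1]
    rw [← Real.rpow_neg ht.le]
  have hbase : IntervalIntegrable (fun t : ℝ => t ^ (-(1/2) : ℝ)) volume 0 (c - a) :=
    intervalIntegral.intervalIntegrable_rpow' (by norm_num)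
  have hcomp : IntervalIntegrable (fun y : ℝ => (c - y) ^ (-(1/2) : ℝ)) volume a c := by
    have := hbase.comp_sub_left c
    simpa using this.symm
  have hint : IntegrableOn (fun y => (2 * Real.sqrt (c - y))⁻¹) (Set.Ioo a c) := by
    have h1 : IntegrableOn (fun y : ℝ => (c - y) ^ (-(1/2) : ℝ)) (Set.Ioo a c) :=
      ((intervalIntegrable_iff_integrableOn_Ioc_of_le hac).mp hcomp).mono_set Set.Ioo_subset_Ioc_self
    exact MeasureTheory.IntegrableOn.congr_fun (h1.const_mul 2⁻¹) heq.symm measurableSet_Ioo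
  have hval : ∫ y in Set.Ioo a c, (2 * Real.sqrt (c - y))⁻¹ = Real.sqrt (c - a) := by
    rw [setIntegral_congr_fun measurableSet_Ioo heq]
    rw [← MeasureTheory.integral_Ioc_eq_integral_Ioo,
      ← intervalIntegral.integral_of_le hac]
    rw [intervalIntegral.integral_const_mul]
    have := intervalIntegral.integral_comp_sub_left (a := a) (b := c)
      (fun t : ℝ => t ^ (-(1/2) : ℝ)) c
    rw [this]
    simp only [sub_self]
    rw [integral_rpow (Or.inl (by norm_num))]
    rw [Real.zero_rpow (by norm_num)]
    rw [Real.sqrt_eq_rpow]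
    norm_num
    ring
  calc ∫⁻ y in Set.Ioo a b, ENNReal.ofReal ((2 * Real.sqrt (c - y))⁻¹)
      ≤ ∫⁻ y in Set.Ioo a c ∪ Set.Ici c, ENNReal.ofReal ((2 * Real.sqrt (c - y))⁻¹) :=
        lintegral_mono_set hsub
    _ ≤ (∫⁻ y in Set.Ioo a c, ENNReal.ofReal ((2 * Real.sqrt (c - y))⁻¹)) +
        ∫⁻ y in Set.Ici c, ENNReal.ofReal ((2 * Real.sqrt (c - y))⁻¹) :=
        lintegral_union_le _ _ _
    _ = ∫⁻ y in Set.Ioo a c, ENNReal.ofReal ((2 * Real.sqrt (c - y))⁻¹) := by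
        rw [hzero, add_zero]
    _ = ENNReal.ofReal (∫ y in Set.Ioo a c, (2 * Real.sqrt (c - y))⁻¹) :=
        (MeasureTheory.ofReal_integral_eq_lintegral_ofReal hint
          (Filter.Eventually.of_forall (fun y => by positivity))).symm
    _ = ENNReal.ofReal (Real.sqrt (c - a)) := by rw [hval]

lemma phi_le (ε : ℝ) (hε : 0 < ε) (hε2 : ε < 1/2) (p : ℝ × ℝ) (hp : p ∈ Teps2 ε) :
    Phi p ≤ 4 * ε * (Real.sqrt (p.1 ^ 2 - 4 * p.2 + 8))⁻¹ := by
  obtain ⟨⟨⟨habs, hpar⟩, hsq⟩, hx1, hx2⟩ := hp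
  set x := p.1 with hxdef; set y := p.2 with hydef
  obtain ⟨habs1, habs2⟩ := abs_lt.mp habs
  have hD : (0:ℝ) < x ^ 2 - 4 * y + 8 := by linarith
  have hA : (0:ℝ) ≤ y - 2 * x + 2 := by linarith
  have hB : (0:ℝ) ≤ y + 2 * x + 2 := by linarith
  have hxpos : (0:ℝ) < x := by linarith
  have hy6 : y < 6 := by nlinarith
  have hAε : y - 2 * x + 2 ≤ ε ^ 2 := by nlinarith
  have hB16 : y + 2 * x + 2 ≤ 16 := by nlinarith
  have hAB : (y - 2 * x + 2) * (y + 2 * x + 2) ≤ 16 * ε ^ 2 := by nlinarith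
  have hpi : (1 : ℝ) / (2 * π ^ 2) ≤ 1 := by
    have h3 := Real.pi_gt_three
    rw [div_le_one (by nlinarith)]
    nlinarith
  have step1 : Phi p ≤ Real.sqrt ((y - 2 * x + 2) * (y + 2 * x + 2) / (x ^ 2 - 4 * y + 8)) := by
    unfold Phi
    rw [← hxdef, ← hydef]
    nlinarith [Real.sqrt_nonneg ((y - 2 * x + 2) * (y + 2 * x + 2) / (x ^ 2 - 4 * y + 8)),
      Real.pi_gt_three, sq_nonneg π]
  have step2 : Real.sqrt ((y - 2 * x + 2) * (y + 2 * x + 2) / (x ^ 2 - 4 * y + 8))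
      ≤ Real.sqrt (16 * ε ^ 2 / (x ^ 2 - 4 * y + 8)) := by
    apply Real.sqrt_le_sqrt
    gcongr
  have step3 : Real.sqrt (16 * ε ^ 2 / (x ^ 2 - 4 * y + 8))
      = 4 * ε * (Real.sqrt (x ^ 2 - 4 * y + 8))⁻¹ := by
    rw [Real.sqrt_div (by positivity), show 16 * ε ^ 2 = (4 * ε) ^ 2 by ring,
      Real.sqrt_sq (by positivity), div_eq_mul_inv]
  calc Phi p ≤ _ := step1
    _ ≤ _ := step2
    _ = _ := step3

lemma mem_prod_of_mem (ε : ℝ) (hε : 0 < ε) (hε2 : ε < 1/2) :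
    Teps2 ε ⊆ Set.Ioo (4 - 2*ε) 4 ×ˢ Set.Ioo (6 - 4*ε) 6 := by
  rintro ⟨x, y⟩ ⟨⟨⟨habs, hpar⟩, hsq⟩, hx1, hx2⟩
  simp only [Set.mem_prod, Set.mem_Ioo]
  refine ⟨⟨hx1, hx2⟩, ?_, ?_⟩
  · have hu : x ^ 2 / 4 - y + 2 < ε ^ 2 := (Real.sqrt_lt' hε).mp hsq
    nlinarith
  · have hxpos : 0 < x := by linarith
    nlinarith

/-- `2·∫_{T²_ε} Φ = O(ε²)` as `ε → 0⁺`. -/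
theorem stmt_9 :
    ∃ C > (0 : ℝ), ∃ ε₀ > (0 : ℝ), ∀ ε : ℝ, 0 < ε → ε < ε₀ →
      2 * (∫ p in Teps2 ε, Phi p) ≤ C * ε ^ 2 := by
  refine ⟨32, by norm_num, 1/2, by norm_num, ?_⟩
  intro ε hε hε2
  have hsqε : Real.sqrt ε ≤ 1 := by
    rw [show (1:ℝ) = Real.sqrt 1 by simp]
    exact Real.sqrt_le_sqrt (by linarith)
  have hPhim : Measurable Phi := by unfold Phi; fun_prop
  have hPhinn : ∀ p, 0 ≤ Phi p := by
    intro p; unfold Phi; positivity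
  have hHm : Measurable fun p : ℝ × ℝ =>
      ENNReal.ofReal (4 * ε * (Real.sqrt (p.1 ^ 2 - 4 * p.2 + 8))⁻¹) := by
    fun_prop
  -- step 1 : integral to lintegral
  have heq1 : ∫ p in Teps2 ε, Phi p
      = (∫⁻ p in Teps2 ε, ENNReal.ofReal (Phi p)).toReal :=
    integral_eq_lintegral_of_nonneg_ae (ae_of_all _ hPhinn) hPhim.aestronglyMeasurable
  -- step 2 : pointwise bound
  have L1 : ∫⁻ p in Teps2 ε, ENNReal.ofReal (Phi p)
      ≤ ∫⁻ p in Teps2 ε, ENNReal.ofReal (4 * ε * (Real.sqrt (p.1 ^ 2 - 4 * p.2 + 8))⁻¹) :=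
    setLIntegral_mono hHm fun p hp =>
      ENNReal.ofReal_le_ofReal (phi_le ε hε hε2 p hp)
  -- step 3 : enlarge to a product set
  have L2 : ∫⁻ p in Teps2 ε, ENNReal.ofReal (4 * ε * (Real.sqrt (p.1 ^ 2 - 4 * p.2 + 8))⁻¹)
      ≤ ∫⁻ p in Set.Ioo (4 - 2*ε) 4 ×ˢ Set.Ioo (6 - 4*ε) 6,
          ENNReal.ofReal (4 * ε * (Real.sqrt (p.1 ^ 2 - 4 * p.2 + 8))⁻¹) :=
    lintegral_mono_set (mem_prod_of_mem ε hε hε2)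
  -- step 4 : Tonelli
  have L3 : ∫⁻ p in Set.Ioo (4 - 2*ε) 4 ×ˢ Set.Ioo (6 - 4*ε) 6,
        ENNReal.ofReal (4 * ε * (Real.sqrt (p.1 ^ 2 - 4 * p.2 + 8))⁻¹)
      = ∫⁻ x in Set.Ioo (4 - 2*ε) 4, ∫⁻ y in Set.Ioo (6 - 4*ε) 6,
          ENNReal.ofReal (4 * ε * (Real.sqrt (x ^ 2 - 4 * y + 8))⁻¹) := by
    rw [Measure.volume_eq_prod, ← Measure.prod_restrict,
      MeasureTheory.lintegral_prod _ hHm.aemeasurable]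
  -- step 5 : inner integral bound
  have inner_bound : ∀ x ∈ Set.Ioo (4 - 2*ε) 4,
      (∫⁻ y in Set.Ioo (6 - 4*ε) 6,
        ENNReal.ofReal (4 * ε * (Real.sqrt (x ^ 2 - 4 * y + 8))⁻¹))
      ≤ ENNReal.ofReal (8 * ε * Real.sqrt ε) := by
    intro x hx
    obtain ⟨hx1, hx2⟩ := hx
    set c : ℝ := (x ^ 2 + 8) / 4 with hc
    have hxpos : 0 < x := by linarith
    have hrw : ∀ y : ℝ, Real.sqrt (x ^ 2 - 4 * y + 8) = 2 * Real.sqrt (c - y) := by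
      intro y
      have : x ^ 2 - 4 * y + 8 = 4 * (c - y) := by rw [hc]; ring
      rw [this, Real.sqrt_mul (by norm_num), show Real.sqrt 4 = 2 by
        rw [show (4:ℝ) = 2 ^ 2 by norm_num, Real.sqrt_sq (by norm_num)]]
    have hac : 6 - 4*ε ≤ c := by rw [hc]; nlinarith
    calc (∫⁻ y in Set.Ioo (6 - 4*ε) 6,
          ENNReal.ofReal (4 * ε * (Real.sqrt (x ^ 2 - 4 * y + 8))⁻¹))
        = ∫⁻ y in Set.Ioo (6 - 4*ε) 6,
            ENNReal.ofReal (4 * ε) * ENNReal.ofReal ((2 * Real.sqrt (c - y))⁻¹) := by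
          refine lintegral_congr fun y => ?_
          rw [hrw y, ENNReal.ofReal_mul (by positivity)]
      _ = ENNReal.ofReal (4 * ε) * ∫⁻ y in Set.Ioo (6 - 4*ε) 6,
            ENNReal.ofReal ((2 * Real.sqrt (c - y))⁻¹) :=
          lintegral_const_mul' _ _ ENNReal.ofReal_ne_top
      _ ≤ ENNReal.ofReal (4 * ε) * ENNReal.ofReal (Real.sqrt (c - (6 - 4*ε))) := by
          gcongr
          exact key_ioo _ _ _ hac
      _ ≤ ENNReal.ofReal (4 * ε) * ENNReal.ofReal (2 * Real.sqrt ε) := by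
          gcongr
          have h1 : c - (6 - 4*ε) ≤ 4 * ε := by rw [hc]; nlinarith
          calc Real.sqrt (c - (6 - 4*ε)) ≤ Real.sqrt (4 * ε) := Real.sqrt_le_sqrt h1
            _ = 2 * Real.sqrt ε := by
                rw [Real.sqrt_mul (by norm_num), show Real.sqrt 4 = 2 by
                  rw [show (4:ℝ) = 2 ^ 2 by norm_num, Real.sqrt_sq (by norm_num)]]
      _ = ENNReal.ofReal (8 * ε * Real.sqrt ε) := by
          rw [← ENNReal.ofReal_mul (by positivity)]
          ring_nf
  -- step 6 : outer integral
  have L4 : (∫⁻ x in Set.Ioo (4 - 2*ε) 4, ∫⁻ y in Set.Ioo (6 - 4*ε) 6,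
        ENNReal.ofReal (4 * ε * (Real.sqrt (x ^ 2 - 4 * y + 8))⁻¹))
      ≤ ENNReal.ofReal (8 * ε * Real.sqrt ε) * ENNReal.ofReal (2 * ε) := by
    calc (∫⁻ x in Set.Ioo (4 - 2*ε) 4, ∫⁻ y in Set.Ioo (6 - 4*ε) 6,
          ENNReal.ofReal (4 * ε * (Real.sqrt (x ^ 2 - 4 * y + 8))⁻¹))
        ≤ ∫⁻ _ in Set.Ioo (4 - 2*ε) 4, ENNReal.ofReal (8 * ε * Real.sqrt ε) :=
          setLIntegral_mono measurable_const inner_bound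
      _ = ENNReal.ofReal (8 * ε * Real.sqrt ε) * volume (Set.Ioo (4 - 2*ε) 4) :=
          setLIntegral_const _ _
      _ = ENNReal.ofReal (8 * ε * Real.sqrt ε) * ENNReal.ofReal (2 * ε) := by
          rw [Real.volume_Ioo, show 4 - (4 - 2*ε) = 2*ε by ring]
  -- put everything together
  have hfin : (ENNReal.ofReal (8 * ε * Real.sqrt ε) * ENNReal.ofReal (2 * ε)) ≠ ⊤ :=
    ENNReal.mul_ne_top ENNReal.ofReal_ne_top ENNReal.ofReal_ne_top
  have hle : ∫ p in Teps2 ε, Phi p ≤ 16 * ε ^ 2 * Real.sqrt ε := by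
    rw [heq1]
    have := ENNReal.toReal_mono hfin ((L1.trans L2).trans (L3.le.trans L4))
    refine this.trans ?_
    rw [ENNReal.toReal_mul, ENNReal.toReal_ofReal (by positivity),
      ENNReal.toReal_ofReal (by positivity)]
    nlinarith [Real.sqrt_nonneg ε]
  have : 16 * ε ^ 2 * Real.sqrt ε ≤ 16 * ε ^ 2 := by nlinarith [Real.sqrt_nonneg ε]
  linarith
end

section
/- Let ℓ be an odd prime, k a positive integer, and f a monic quadratic polynomial in (ℤ/ℓᵏℤ)[X] with discriminant D (so if f = X² + bX + c then D = b² − 4c). Then the number of roots of f in ℤ/ℓᵏℤ equals: ℓ^{⌊k/2⌋} if D = 0; 2ℓ^i if D = u²ℓ^{2i} for some unit u ∈ (ℤ/ℓᵏℤ)^× and some integer i with 0 ≤ 2i < k; and 0 in all other cases. -/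
section helpers
variable {ℓ k : ℕ}

lemma aux_pow_cast_eq_zero_iff (hℓ : ℓ.Prime) (t : ℕ) :
    (ℓ : ZMod (ℓ ^ k)) ^ t = 0 ↔ k ≤ t := by
  have h : ((ℓ ^ t : ℕ) : ZMod (ℓ ^ k)) = (ℓ : ZMod (ℓ ^ k)) ^ t := by push_cast; ring
  rw [← h, ZMod.natCast_eq_zero_iff, Nat.pow_dvd_pow_iff_le_right hℓ.one_lt]

lemma aux_pow_dvd_iff_val (hℓ : ℓ.Prime) {t : ℕ} (ht : t ≤ k) (x : ZMod (ℓ ^ k)) :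
    (ℓ : ZMod (ℓ ^ k)) ^ t ∣ x ↔ ℓ ^ t ∣ x.val := by
  haveI : NeZero (ℓ ^ k) := ⟨pow_ne_zero k hℓ.ne_zero⟩
  have hdvd : ℓ ^ t ∣ ℓ ^ k := pow_dvd_pow ℓ ht
  constructor
  · rintro ⟨y, rfl⟩
    rw [ZMod.val_mul, Nat.dvd_mod_iff hdvd]
    apply dvd_mul_of_dvd_left
    have h : ((ℓ : ZMod (ℓ^k)) ^ t) = ((ℓ ^ t : ℕ) : ZMod (ℓ^k)) := by push_cast; ring
    rw [h, ZMod.val_natCast, Nat.dvd_mod_iff hdvd]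
  · rintro ⟨m, hm⟩
    refine ⟨(m : ZMod (ℓ^k)), ?_⟩
    have h := ZMod.natCast_rightInverse (n := ℓ^k) x
    rw [← h, hm]; push_cast; ring

lemma aux_card_dvd_pow (hℓ : ℓ.Prime) {t : ℕ} (ht : t ≤ k) :
    Nat.card {x : ZMod (ℓ ^ k) | (ℓ : ZMod (ℓ ^ k)) ^ t ∣ x} = ℓ ^ (k - t) := by
  haveI : NeZero (ℓ ^ k) := ⟨pow_ne_zero k hℓ.ne_zero⟩
  haveI : NeZero (ℓ ^ (k - t)) := ⟨pow_ne_zero _ hℓ.ne_zero⟩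
  have hpos : 0 < ℓ ^ t := pow_pos hℓ.pos t
  have hsplit : ℓ ^ t * ℓ ^ (k - t) = ℓ ^ k := by rw [← pow_add]; congr 1; omega
  have key : ∀ y : ZMod (ℓ ^ (k - t)), ((ℓ ^ t * y.val : ℕ) : ZMod (ℓ^k)).val = ℓ ^ t * y.val := by
    intro y
    apply ZMod.val_cast_of_lt
    calc ℓ^t * y.val < ℓ^t * ℓ^(k-t) := (Nat.mul_lt_mul_left hpos).mpr (ZMod.val_lt y)
      _ = ℓ^k := hsplit
  have e : {x : ZMod (ℓ ^ k) | (ℓ : ZMod (ℓ ^ k)) ^ t ∣ x} ≃ ZMod (ℓ ^ (k - t)) :=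
  { toFun := fun x => ((x.1.val / ℓ ^ t : ℕ) : ZMod (ℓ ^ (k - t)))
    invFun := fun y => ⟨((ℓ ^ t * y.val : ℕ) : ZMod (ℓ ^ k)), by
      rw [Set.mem_setOf_eq, aux_pow_dvd_iff_val hℓ ht, key y]; exact Dvd.intro _ rfl⟩
    left_inv := by
      rintro ⟨x, hx⟩
      have hxd : ℓ ^ t ∣ x.val := (aux_pow_dvd_iff_val hℓ ht x).mp hx
      have hq : x.val / ℓ^t < ℓ^(k-t) := Nat.div_lt_of_lt_mul (by rw [hsplit]; exact ZMod.val_lt x)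
      apply Subtype.ext
      show ((ℓ ^ t * (((x.val / ℓ ^ t : ℕ) : ZMod (ℓ ^ (k - t))).val) : ℕ) : ZMod (ℓ^k)) = x
      rw [ZMod.val_cast_of_lt hq, Nat.mul_div_cancel' hxd]
      exact ZMod.natCast_rightInverse x
    right_inv := by
      intro y
      show (((((ℓ ^ t * y.val : ℕ) : ZMod (ℓ^k))).val / ℓ ^ t : ℕ) : ZMod (ℓ ^ (k - t))) = y
      rw [key y, Nat.mul_div_cancel_left _ hpos]
      exact ZMod.natCast_rightInverse y }
  rw [Nat.card_congr e, Nat.card_zmod]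

lemma aux_card_dvd_pow_shift (hℓ : ℓ.Prime) {t : ℕ} (ht : t ≤ k) (a : ZMod (ℓ ^ k)) :
    Nat.card {x : ZMod (ℓ ^ k) | (ℓ : ZMod (ℓ ^ k)) ^ t ∣ x - a} = ℓ ^ (k - t) := by
  rw [← aux_card_dvd_pow hℓ ht]
  apply Nat.card_congr
  exact Equiv.subtypeEquiv (Equiv.subRight a) (fun x => by simp [Equiv.subRight])

lemma aux_structure (hℓ : ℓ.Prime) {x : ZMod (ℓ ^ k)} (hx : x ≠ 0) :
    ∃ (v : (ZMod (ℓ ^ k))ˣ) (j : ℕ), j < k ∧ x = (v : ZMod (ℓ ^ k)) * (ℓ : ZMod (ℓ ^ k)) ^ j := by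
  haveI : NeZero (ℓ ^ k) := ⟨pow_ne_zero k hℓ.ne_zero⟩
  have hn : x.val ≠ 0 := fun h => hx (by rwa [ZMod.val_eq_zero] at h)
  obtain ⟨j, m, hm, hnm⟩ := Nat.exists_eq_pow_mul_and_not_dvd hn ℓ hℓ.ne_one
  have hm0 : m ≠ 0 := fun h => hm (h ▸ dvd_zero ℓ)
  have hjk : j < k := by
    have h1 : ℓ ^ j ≤ x.val := hnm ▸ Nat.le_mul_of_pos_right _ (Nat.pos_of_ne_zero hm0)
    have h2 : x.val < ℓ ^ k := ZMod.val_lt x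
    exact (pow_lt_pow_iff_right₀ hℓ.one_lt).mp (lt_of_le_of_lt h1 h2)
  have hco : m.Coprime (ℓ ^ k) :=
    Nat.Coprime.pow_right k ((Nat.coprime_comm).mp (hℓ.coprime_iff_not_dvd.mpr hm))
  refine ⟨ZMod.unitOfCoprime m hco, j, hjk, ?_⟩
  have h := ZMod.natCast_rightInverse (n := ℓ^k) x
  rw [← h, hnm]
  push_cast
  rw [ZMod.coe_unitOfCoprime]
  ring

lemma aux_not_dvd (hℓ : ℓ.Prime) {i : ℕ} (hi : i < k) :
    ¬ (ℓ : ZMod (ℓ ^ k)) ^ (i + 1) ∣ (ℓ : ZMod (ℓ ^ k)) ^ i := by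
  haveI : NeZero (ℓ ^ k) := ⟨pow_ne_zero k hℓ.ne_zero⟩
  intro h
  rw [aux_pow_dvd_iff_val hℓ (by omega)] at h
  have hv : ((ℓ : ZMod (ℓ^k)) ^ i).val = ℓ ^ i := by
    have h2 : ((ℓ : ZMod (ℓ^k)) ^ i) = ((ℓ ^ i : ℕ) : ZMod (ℓ^k)) := by push_cast; ring
    rw [h2]
    exact ZMod.val_cast_of_lt (Nat.pow_lt_pow_right hℓ.one_lt hi)
  rw [hv] at h
  have := (Nat.pow_dvd_pow_iff_le_right hℓ.one_lt).mp h
  omega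

end helpers
/-- Number of roots of a monic quadratic polynomial `X² + bX + c` over `ℤ/ℓᵏℤ`
(`ℓ` an odd prime, `k ≥ 1`), in terms of its discriminant `D = b² − 4c`:
`ℓ^⌊k/2⌋` roots if `D = 0`; `2ℓⁱ` roots if `D = u²ℓ^(2i)` with `u` a unit and
`0 ≤ 2i < k`; and no roots otherwise. -/
theorem stmt_10 (ℓ k : ℕ) (hℓ : ℓ.Prime) (hodd : ℓ ≠ 2) (hk : 1 ≤ k)
    (b c : ZMod (ℓ ^ k)) :
    (b ^ 2 - 4 * c = 0 →
      Nat.card {r : ZMod (ℓ ^ k) | r ^ 2 + b * r + c = 0} = ℓ ^ (k / 2)) ∧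
    (∀ (u : (ZMod (ℓ ^ k))ˣ) (i : ℕ), 2 * i < k →
      b ^ 2 - 4 * c = (u : ZMod (ℓ ^ k)) ^ 2 * (ℓ : ZMod (ℓ ^ k)) ^ (2 * i) →
      Nat.card {r : ZMod (ℓ ^ k) | r ^ 2 + b * r + c = 0} = 2 * ℓ ^ i) ∧
    (b ^ 2 - 4 * c ≠ 0 →
      (¬ ∃ (u : (ZMod (ℓ ^ k))ˣ) (i : ℕ), 2 * i < k ∧
        b ^ 2 - 4 * c = (u : ZMod (ℓ ^ k)) ^ 2 * (ℓ : ZMod (ℓ ^ k)) ^ (2 * i)) →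
      Nat.card {r : ZMod (ℓ ^ k) | r ^ 2 + b * r + c = 0} = 0) := by
  haveI : NeZero (ℓ ^ k) := ⟨pow_ne_zero k hℓ.ne_zero⟩
  -- P denotes (ℓ : ZMod (ℓ^k)) below, written out
  have h2 : IsUnit (2 : ZMod (ℓ ^ k)) := by
    have hcop : Nat.Coprime 2 (ℓ ^ k) := Nat.coprime_two_left.mpr ((hℓ.odd_of_ne_two hodd).pow)
    have := (ZMod.isUnit_iff_coprime 2 (ℓ ^ k)).mpr hcop
    simpa using this
  obtain ⟨h, hh⟩ : ∃ h : ZMod (ℓ ^ k), 2 * h = 1 :=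
    ⟨(h2.unit⁻¹ : (ZMod (ℓ ^ k))ˣ), by
      have := h2.unit.mul_inv
      rwa [h2.unit_spec] at this⟩
  have hcard : Nat.card {r : ZMod (ℓ ^ k) | r ^ 2 + b * r + c = 0}
      = Nat.card {x : ZMod (ℓ ^ k) | x ^ 2 = h ^ 2 * (b ^ 2 - 4 * c)} := by
    apply Nat.card_congr
    refine Equiv.subtypeEquiv (Equiv.addRight (b * h)) (fun r => ?_)
    simp only [Set.mem_setOf_eq, Equiv.coe_addRight]
    constructor
    · intro hr; linear_combination hr + (b * r + c * (2 * h + 1)) * hh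
    · intro hr; linear_combination hr - (b * r + c * (2 * h + 1)) * hh
  refine ⟨?_, ?_, ?_⟩
  · -- D = 0 case
    intro hD
    rw [hcard]
    have hset : {x : ZMod (ℓ ^ k) | x ^ 2 = h ^ 2 * (b ^ 2 - 4 * c)}
        = {x : ZMod (ℓ ^ k) | (ℓ : ZMod (ℓ ^ k)) ^ (k - k / 2) ∣ x} := by
      ext x
      simp only [Set.mem_setOf_eq, hD, mul_zero]
      constructor
      · intro hx
        by_cases hx0 : x = 0
        · rw [hx0]; exact dvd_zero _
        · obtain ⟨v, j, hj, rfl⟩ := aux_structure hℓ hx0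
          have h1 : ((v ^ 2 : (ZMod (ℓ ^ k))ˣ) : ZMod (ℓ ^ k))
              * ((ℓ : ZMod (ℓ ^ k)) ^ j) ^ 2 = 0 := by
            rw [Units.val_pow_eq_pow_val]; linear_combination hx
          have h3 : ((ℓ : ZMod (ℓ ^ k)) ^ j) ^ 2 = 0 := (Units.mul_right_eq_zero _).mp h1
          rw [← pow_mul] at h3
          have hk2 : k ≤ j * 2 := (aux_pow_cast_eq_zero_iff hℓ _).mp h3
          exact (pow_dvd_pow _ (by omega : k - k / 2 ≤ j)).mul_left _
      · rintro ⟨y, rfl⟩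
        have h0 : (ℓ : ZMod (ℓ ^ k)) ^ ((k - k / 2) * 2) = 0 :=
          (aux_pow_cast_eq_zero_iff hℓ _).mpr (by omega)
        calc ((ℓ : ZMod (ℓ ^ k)) ^ (k - k / 2) * y) ^ 2
            = (ℓ : ZMod (ℓ ^ k)) ^ ((k - k / 2) * 2) * y ^ 2 := by rw [pow_mul]; ring
          _ = 0 := by rw [h0, zero_mul]
    rw [hset, aux_card_dvd_pow hℓ (by omega)]
    congr 1
    omega
  · -- D = u² ℓ^{2i} case
    intro u i h2i hDu
    rw [hcard]
    set a : ZMod (ℓ ^ k) := h * (u : ZMod (ℓ ^ k)) * (ℓ : ZMod (ℓ ^ k)) ^ i with ha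
    have ha2 : a ^ 2 = h ^ 2 * (b ^ 2 - 4 * c) := by
      rw [hDu, ha, two_mul, pow_add]; ring
    have hk0 : (ℓ : ZMod (ℓ ^ k)) ^ i * (ℓ : ZMod (ℓ ^ k)) ^ (k - i) = 0 := by
      rw [← pow_add, show i + (k - i) = k by omega]
      exact (aux_pow_cast_eq_zero_iff hℓ k).mpr le_rfl
    have hq2 : ((ℓ : ZMod (ℓ ^ k)) ^ (k - i)) ^ 2 = 0 := by
      rw [← pow_mul]; exact (aux_pow_cast_eq_zero_iff hℓ _).mpr (by omega)
    have hset : {x : ZMod (ℓ ^ k) | x ^ 2 = h ^ 2 * (b ^ 2 - 4 * c)}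
        = {x : ZMod (ℓ ^ k) | (ℓ : ZMod (ℓ ^ k)) ^ (k - i) ∣ x - a}
          ∪ {x : ZMod (ℓ ^ k) | (ℓ : ZMod (ℓ ^ k)) ^ (k - i) ∣ x - (-a)} := by
      ext x
      simp only [Set.mem_setOf_eq, Set.mem_union, ← ha2]
      constructor
      · intro hx
        have hst : (x - a) * (x + a) = 0 := by linear_combination hx
        by_cases hs0 : x - a = 0
        · exact Or.inl (by rw [hs0]; exact dvd_zero _)
        by_cases ht0 : x + a = 0
        · exact Or.inr (by rw [sub_neg_eq_add, ht0]; exact dvd_zero _)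
        obtain ⟨v₁, e, he, hse⟩ := aux_structure hℓ hs0
        obtain ⟨v₂, f, hf, htf⟩ := aux_structure hℓ ht0
        have hef : k ≤ e + f := by
          have h0 : ((v₁ * v₂ : (ZMod (ℓ ^ k))ˣ) : ZMod (ℓ ^ k))
              * (ℓ : ZMod (ℓ ^ k)) ^ (e + f) = 0 := by
            rw [Units.val_mul, pow_add, ← hst, hse, htf]; ring
          exact (aux_pow_cast_eq_zero_iff hℓ _).mp ((Units.mul_right_eq_zero _).mp h0)
        by_cases he1 : e ≤ i
        · refine Or.inr ?_
          rw [sub_neg_eq_add, htf]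
          exact (pow_dvd_pow _ (by omega : k - i ≤ f)).mul_left _
        · by_cases hf1 : f ≤ i
          · refine Or.inl ?_
            rw [hse]
            exact (pow_dvd_pow _ (by omega : k - i ≤ e)).mul_left _
          · exfalso
            have d1 : (ℓ : ZMod (ℓ ^ k)) ^ (i + 1) ∣ x - a := by
              rw [hse]; exact (pow_dvd_pow _ (by omega : i + 1 ≤ e)).mul_left _
            have d2 : (ℓ : ZMod (ℓ ^ k)) ^ (i + 1) ∣ x + a := by
              rw [htf]; exact (pow_dvd_pow _ (by omega : i + 1 ≤ f)).mul_left _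
            have h4 : (x + a) - (x - a) = (u : ZMod (ℓ ^ k)) * (ℓ : ZMod (ℓ ^ k)) ^ i := by
              rw [ha]; linear_combination ((u : ZMod (ℓ ^ k)) * (ℓ : ZMod (ℓ ^ k)) ^ i) * hh
            have d3 : (ℓ : ZMod (ℓ ^ k)) ^ (i + 1)
                ∣ (u : ZMod (ℓ ^ k)) * (ℓ : ZMod (ℓ ^ k)) ^ i := h4 ▸ dvd_sub d2 d1
            obtain ⟨z, hz⟩ := d3
            apply aux_not_dvd hℓ (show i < k by omega)
            refine ⟨(u⁻¹ : (ZMod (ℓ ^ k))ˣ) * z, ?_⟩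
            calc (ℓ : ZMod (ℓ ^ k)) ^ i
                = (u⁻¹ : (ZMod (ℓ ^ k))ˣ) * ((u : ZMod (ℓ ^ k)) * (ℓ : ZMod (ℓ ^ k)) ^ i) := by
                  rw [← mul_assoc, u.inv_mul, one_mul]
              _ = (u⁻¹ : (ZMod (ℓ ^ k))ˣ) * ((ℓ : ZMod (ℓ ^ k)) ^ (i + 1) * z) := by rw [hz]
              _ = (ℓ : ZMod (ℓ ^ k)) ^ (i + 1) * ((u⁻¹ : (ZMod (ℓ ^ k))ˣ) * z) := by ring
      · have hgen : ∀ s : ZMod (ℓ ^ k), s ^ 2 = a ^ 2 → s * (ℓ : ZMod (ℓ ^ k)) ^ (k - i) = 0 →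
            (ℓ : ZMod (ℓ ^ k)) ^ (k - i) ∣ x - s → x ^ 2 = a ^ 2 := by
          intro s hs2 hs0 ⟨y, hy⟩
          have hx : x = s + (ℓ : ZMod (ℓ ^ k)) ^ (k - i) * y := by linear_combination hy
          rw [hx]
          linear_combination hs2 + (2 * y) * hs0 + y ^ 2 * hq2
        rintro (hA | hB)
        · exact hgen a rfl (by rw [ha]; linear_combination (h * (u : ZMod (ℓ ^ k))) * hk0) hA
        · exact hgen (-a) (by ring)
            (by rw [ha]; linear_combination (-(h * (u : ZMod (ℓ ^ k)))) * hk0)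
            hB
    have hdisj : Disjoint {x : ZMod (ℓ ^ k) | (ℓ : ZMod (ℓ ^ k)) ^ (k - i) ∣ x - a}
        {x : ZMod (ℓ ^ k) | (ℓ : ZMod (ℓ ^ k)) ^ (k - i) ∣ x - (-a)} := by
      rw [Set.disjoint_left]
      intro x hxA hxB
      simp only [Set.mem_setOf_eq] at hxA hxB
      have h4 : (x - -a) - (x - a) = (u : ZMod (ℓ ^ k)) * (ℓ : ZMod (ℓ ^ k)) ^ i := by
        rw [ha]; linear_combination ((u : ZMod (ℓ ^ k)) * (ℓ : ZMod (ℓ ^ k)) ^ i) * hh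
      have d3 : (ℓ : ZMod (ℓ ^ k)) ^ (i + 1)
          ∣ (u : ZMod (ℓ ^ k)) * (ℓ : ZMod (ℓ ^ k)) ^ i :=
        h4 ▸ ((pow_dvd_pow _ (by omega : i + 1 ≤ k - i)).trans (dvd_sub hxB hxA))
      obtain ⟨z, hz⟩ := d3
      apply aux_not_dvd hℓ (show i < k by omega)
      refine ⟨(u⁻¹ : (ZMod (ℓ ^ k))ˣ) * z, ?_⟩
      calc (ℓ : ZMod (ℓ ^ k)) ^ i
          = (u⁻¹ : (ZMod (ℓ ^ k))ˣ) * ((u : ZMod (ℓ ^ k)) * (ℓ : ZMod (ℓ ^ k)) ^ i) := by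
            rw [← mul_assoc, u.inv_mul, one_mul]
        _ = (u⁻¹ : (ZMod (ℓ ^ k))ˣ) * ((ℓ : ZMod (ℓ ^ k)) ^ (i + 1) * z) := by rw [hz]
        _ = (ℓ : ZMod (ℓ ^ k)) ^ (i + 1) * ((u⁻¹ : (ZMod (ℓ ^ k))ˣ) * z) := by ring
    rw [hset]
    rw [Nat.card_coe_set_eq, Set.ncard_union_eq hdisj (Set.toFinite _) (Set.toFinite _),
      ← Nat.card_coe_set_eq, ← Nat.card_coe_set_eq,
      aux_card_dvd_pow_shift hℓ (by omega : k - i ≤ k),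
      aux_card_dvd_pow_shift hℓ (by omega : k - i ≤ k),
      show k - (k - i) = i by omega]
    ring
  · -- no-root case
    intro hD hnex
    rw [hcard]
    have hD4 : b ^ 2 - 4 * c = 4 * (h ^ 2 * (b ^ 2 - 4 * c)) := by
      linear_combination (-(b ^ 2 - 4 * c) * (2 * h + 1)) * hh
    have hd0 : h ^ 2 * (b ^ 2 - 4 * c) ≠ 0 := by
      intro h0; exact hD (by rw [hD4, h0, mul_zero])
    have hTe : {x : ZMod (ℓ ^ k) | x ^ 2 = h ^ 2 * (b ^ 2 - 4 * c)} = ∅ := by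
      rw [Set.eq_empty_iff_forall_notMem]
      intro x hx
      simp only [Set.mem_setOf_eq] at hx
      apply hnex
      have hx0 : x ≠ 0 := by
        rintro rfl
        exact hd0 (by rw [← hx]; ring)
      obtain ⟨v, j, hj, hxe⟩ := aux_structure hℓ hx0
      subst hxe
      have h2j : 2 * j < k := by
        by_contra hcon
        apply hd0
        rw [← hx]
        have h0 : (ℓ : ZMod (ℓ ^ k)) ^ (j * 2) = 0 :=
          (aux_pow_cast_eq_zero_iff hℓ _).mpr (by omega)
        calc ((v : ZMod (ℓ ^ k)) * (ℓ : ZMod (ℓ ^ k)) ^ j) ^ 2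
            = (ℓ : ZMod (ℓ ^ k)) ^ (j * 2) * (v : ZMod (ℓ ^ k)) ^ 2 := by rw [pow_mul]; ring
          _ = 0 := by rw [h0, zero_mul]
      refine ⟨h2.unit * v, j, h2j, ?_⟩
      have hcoe : ((h2.unit * v : (ZMod (ℓ ^ k))ˣ) : ZMod (ℓ ^ k))
          = 2 * (v : ZMod (ℓ ^ k)) := by rw [Units.val_mul, h2.unit_spec]
      rw [hcoe, hD4, ← hx, two_mul j, pow_add]
      ring
    rw [hTe]
    simp
end

section
/- Let ℓ be an odd prime, k ≥ 1, and D an integer that is a quadratic nonresidue modulo ℓ. Let R_k = (ℤ/ℓᵏℤ)[X]/(X² − D) with α the image of X, and for b ∈ R_k let v(b) = max{t ∈ {0,…,k} | b ∈ ℓᵗ R_k}. Fix 1 ≤ r ≤ k, elements a, d ∈ R_k, and b ∈ R_k with v(b) = r. Then there exists c ∈ R_k such that the matrix [[a,b],[c,d]] lies in 𝒜ᵗ_{ℓᵏ,I} (i.e., its determinant lies in the image of (ℤ/ℓᵏℤ)^× and its trace lies in the image of ℤ/ℓᵏℤ) if and only if a·d ∈ im((ℤ/ℓᵏℤ)^×)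 + α·ℓʳ·im(ℤ/ℓᵏℤ) and a + d ∈ im(ℤ/ℓᵏℤ); moreover, when these two conditions hold, the number of such c is exactly ℓ^{k+r}. -/
open Matrix Polynomial
open scoped Classical

/-- `α`, the image of `X` in `R_k`. -/
noncomputable def alphaI (ℓ k : ℕ) (D : ℤ) : InertRing ℓ k D :=
  AdjoinRoot.root ((X : Polynomial (ZMod (ℓ ^ k))) ^ 2 - C (D : ZMod (ℓ ^ k)))

/-- Truncated `ℓ`-adic valuation on `R_k`: the largest `t ∈ {0,…,k}` with
`b ∈ ℓᵗ R_k` (so `v 0 = k`). -/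
noncomputable def vR (ℓ k : ℕ) (D : ℤ) (b : InertRing ℓ k D) : ℕ :=
  Nat.findGreatest (fun t => ∃ y : InertRing ℓ k D, b = (ℓ : InertRing ℓ k D) ^ t * y) k

/-- Membership of a matrix in `𝒜ᵗ_{ℓᵏ,I}`: its determinant lies in the image of
`(ℤ/ℓᵏℤ)ˣ` and its trace lies in the image of `ℤ/ℓᵏℤ`. -/
def memAt (ℓ k : ℕ) (D : ℤ) (M : Matrix (Fin 2) (Fin 2) (InertRing ℓ k D)) : Prop :=
  (∃ u : (ZMod (ℓ ^ k))ˣ,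
    M.det = algebraMap (ZMod (ℓ ^ k)) (InertRing ℓ k D) (u : ZMod (ℓ ^ k))) ∧
  ∃ z : ZMod (ℓ ^ k), M.trace = algebraMap (ZMod (ℓ ^ k)) (InertRing ℓ k D) z

/-- The two conditions on the pair `(a,d)`:
`a·d ∈ im((ℤ/ℓᵏℤ)ˣ) + α·ℓʳ·im(ℤ/ℓᵏℤ)` and `a + d ∈ im(ℤ/ℓᵏℤ)`. -/
def pairCond (ℓ k : ℕ) (D : ℤ) (r : ℕ) (a d : InertRing ℓ k D) : Prop :=
  (∃ (u : (ZMod (ℓ ^ k))ˣ) (z : ZMod (ℓ ^ k)),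
    a * d = algebraMap (ZMod (ℓ ^ k)) (InertRing ℓ k D) (u : ZMod (ℓ ^ k)) +
      alphaI ℓ k D * (ℓ : InertRing ℓ k D) ^ r *
        algebraMap (ZMod (ℓ ^ k)) (InertRing ℓ k D) z) ∧
  ∃ z : ZMod (ℓ ^ k), a + d = algebraMap (ZMod (ℓ ^ k)) (InertRing ℓ k D) z

namespace AuxIR

variable {ℓ k : ℕ} {D : ℤ}

noncomputable def em (ℓ k : ℕ) (D : ℤ) : ZMod (ℓ ^ k) →+* InertRing ℓ k D :=
  algebraMap _ _

noncomputable def fpoly (ℓ k : ℕ) (D : ℤ) : Polynomial (ZMod (ℓ ^ k)) :=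
  (X : Polynomial (ZMod (ℓ ^ k))) ^ 2 - C (D : ZMod (ℓ ^ k))

lemma fpoly_monic : (fpoly ℓ k D).Monic :=
  monic_X_pow_sub_C _ two_ne_zero

lemma fpoly_natDegree [Nontrivial (ZMod (ℓ ^ k))] : (fpoly ℓ k D).natDegree = 2 :=
  natDegree_X_pow_sub_C

lemma fpoly_ne_one [Nontrivial (ZMod (ℓ ^ k))] : fpoly ℓ k D ≠ 1 := by
  intro h
  have := fpoly_natDegree (ℓ := ℓ) (k := k) (D := D)
  rw [h, natDegree_one] at this
  omega

lemma mk_repr (x y : ZMod (ℓ ^ k)) :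
    AdjoinRoot.mk (fpoly ℓ k D) (C x + C y * X) = em ℓ k D x + em ℓ k D y * alphaI ℓ k D := by
  simp only [map_add, _root_.map_mul, AdjoinRoot.mk_C, AdjoinRoot.mk_X]
  rfl

lemma repr_ex [Nontrivial (ZMod (ℓ ^ k))] (z : InertRing ℓ k D) :
    ∃ x y : ZMod (ℓ ^ k), z = em ℓ k D x + em ℓ k D y * alphaI ℓ k D := by
  obtain ⟨g, rfl⟩ := AdjoinRoot.mk_surjective (g := fpoly ℓ k D) z
  have hdeg : (g %ₘ fpoly ℓ k D).natDegree ≤ 1 := by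
    have := natDegree_modByMonic_lt g (fpoly_monic (ℓ := ℓ) (k := k) (D := D)) fpoly_ne_one
    rw [fpoly_natDegree] at this; omega
  refine ⟨(g %ₘ fpoly ℓ k D).coeff 0, (g %ₘ fpoly ℓ k D).coeff 1, ?_⟩
  rw [← mk_repr]
  conv_lhs => rw [← modByMonic_add_div g (fpoly ℓ k D)]
  rw [map_add, _root_.map_mul, AdjoinRoot.mk_self, zero_mul, add_zero]
  congr 1
  conv_lhs => rw [eq_X_add_C_of_natDegree_le_one hdeg]
  ring

lemma repr_zero [Nontrivial (ZMod (ℓ ^ k))] {x y : ZMod (ℓ ^ k)}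
    (h : em ℓ k D x + em ℓ k D y * alphaI ℓ k D = 0) : x = 0 ∧ y = 0 := by
  replace h : AdjoinRoot.mk (fpoly ℓ k D) (C x + C y * X) = 0 := by rw [mk_repr]; exact h
  rw [AdjoinRoot.mk_eq_zero] at h
  obtain ⟨s, hs⟩ := h
  by_cases hs0 : s = 0
  · rw [hs0, mul_zero] at hs
    constructor
    · have := congrArg (fun p => Polynomial.coeff p 0) hs
      simpa using this
    · have := congrArg (fun p => Polynomial.coeff p 1) hs
      simpa using this
  · exfalso
    have hdeg : (C x + C y * X).natDegree ≤ 1 := by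
      apply le_trans (natDegree_add_le _ _)
      simp [natDegree_C_mul_le]
      exact le_trans (natDegree_C_mul_le _ _) (by simp)
    have := fpoly_monic (ℓ := ℓ) (k := k) (D := D)
    have h2 : (fpoly ℓ k D * s).natDegree = 2 + s.natDegree := by
      rw [this.natDegree_mul' hs0, fpoly_natDegree]
    rw [← hs] at h2
    omega

lemma repr_unique [Nontrivial (ZMod (ℓ ^ k))] {x y x' y' : ZMod (ℓ ^ k)}
    (h : em ℓ k D x + em ℓ k D y * alphaI ℓ k D = em ℓ k D x' + em ℓ k D y' * alphaI ℓ k D) :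
    x = x' ∧ y = y' := by
  have h0 : em ℓ k D (x - x') + em ℓ k D (y - y') * alphaI ℓ k D = 0 := by
    rw [map_sub, map_sub]; linear_combination h
  have := repr_zero h0
  constructor <;> [skip; skip] <;> [exact sub_eq_zero.mp this.1; exact sub_eq_zero.mp this.2]

lemma alpha_sq : alphaI ℓ k D ^ 2 = em ℓ k D (D : ZMod (ℓ ^ k)) := by
  have h := AdjoinRoot.mk_self (f := fpoly ℓ k D)
  unfold fpoly at h
  rw [map_sub, map_pow, AdjoinRoot.mk_X, AdjoinRoot.mk_C, sub_eq_zero] at h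
  exact h

end AuxIR

namespace AuxIR

lemma ell_pow_eq (r : ℕ) :
    ((ℓ : InertRing ℓ k D)) ^ r = em ℓ k D ((ℓ : ZMod (ℓ ^ k)) ^ r) := by
  rw [map_pow, map_natCast]

lemma mul_repr (x y x' y' : ZMod (ℓ ^ k)) :
    (em ℓ k D x + em ℓ k D y * alphaI ℓ k D) * (em ℓ k D x' + em ℓ k D y' * alphaI ℓ k D)
      = em ℓ k D (x * x' + (D : ZMod (ℓ ^ k)) * y * y')
        + em ℓ k D (x * y' + y * x') * alphaI ℓ k D := by
  simp only [map_add, _root_.map_mul]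
  linear_combination (em ℓ k D y * em ℓ k D y') * alpha_sq (ℓ := ℓ) (k := k) (D := D)

lemma zmod_unit_or (hℓ : ℓ.Prime) (hk : 1 ≤ k) (x : ZMod (ℓ ^ k)) :
    IsUnit x ∨ ∃ y, x = (ℓ : ZMod (ℓ ^ k)) * y := by
  haveI : NeZero (ℓ ^ k) := ⟨pow_ne_zero _ hℓ.ne_zero⟩
  by_cases hdvd : ℓ ∣ x.val
  · obtain ⟨m, hm⟩ := hdvd
    right
    refine ⟨(m : ZMod (ℓ ^ k)), ?_⟩
    have : ((x.val : ℕ) : ZMod (ℓ ^ k)) = x := by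
      simp [ZMod.natCast_val, ZMod.cast_id]
    rw [← this, hm, Nat.cast_mul]
  · left
    have hcop : x.val.Coprime (ℓ ^ k) :=
      Nat.Coprime.pow_right _ ((Nat.Prime.coprime_iff_not_dvd hℓ).mpr hdvd).symm
    have := (ZMod.isUnit_iff_coprime x.val (ℓ ^ k)).mpr hcop
    simpa [ZMod.natCast_val, ZMod.cast_id] using this

lemma zmod_isUnit_add_mul_ell (u w : ZMod (ℓ ^ k)) (hu : IsUnit u) :
    IsUnit (u + (ℓ : ZMod (ℓ ^ k)) * w) := by
  have hnil : IsNilpotent ((ℓ : ZMod (ℓ ^ k)) * w) :=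
    ⟨k, by rw [mul_pow, ← Nat.cast_pow, ZMod.natCast_self, zero_mul]⟩
  exact hnil.isUnit_add_left_of_commute hu (Commute.all _ _)

lemma zmod_isUnit_add_pow_mul {r : ℕ} (hr : 1 ≤ r) (u w : ZMod (ℓ ^ k)) (hu : IsUnit u) :
    IsUnit (u + (ℓ : ZMod (ℓ ^ k)) ^ r * w) := by
  have : (ℓ : ZMod (ℓ ^ k)) ^ r * w = (ℓ : ZMod (ℓ ^ k)) * ((ℓ : ZMod (ℓ ^ k)) ^ (r - 1) * w) := by
    rw [← mul_assoc, ← pow_succ']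
    congr 2
    omega
  rw [this]
  exact zmod_isUnit_add_mul_ell _ _ hu

lemma card_ker (hℓ : ℓ.Prime) {r : ℕ} (hrk : r ≤ k) :
    Nat.card {s : ZMod (ℓ ^ k) | (ℓ : ZMod (ℓ ^ k)) ^ r * s = 0} = ℓ ^ r := by
  haveI : NeZero (ℓ ^ k) := ⟨pow_ne_zero _ hℓ.ne_zero⟩
  have hℓpos : 1 ≤ ℓ := hℓ.one_lt.le
  have hkr : ℓ ^ (k - r) * ℓ ^ r = ℓ ^ k := by
    rw [← pow_add]; congr 1; omega
  refine Nat.card_eq_of_equiv_fin (Equiv.symm (Equiv.ofBijective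
    (fun m : Fin (ℓ ^ r) => (⟨((ℓ ^ (k - r) * (m : ℕ) : ℕ) : ZMod (ℓ ^ k)), ?_⟩ :
      {s : ZMod (ℓ ^ k) | (ℓ : ZMod (ℓ ^ k)) ^ r * s = 0})) ⟨?_, ?_⟩))
  · show (ℓ : ZMod (ℓ ^ k)) ^ r * _ = 0
    push_cast
    rw [show (ℓ : ZMod (ℓ ^ k)) ^ r * ((ℓ : ZMod (ℓ ^ k)) ^ (k - r) * (m : ZMod (ℓ ^ k)))
        = (ℓ : ZMod (ℓ ^ k)) ^ (k - r) * (ℓ : ZMod (ℓ ^ k)) ^ r * (m : ZMod (ℓ ^ k)) by ring,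
      ← Nat.cast_pow, ← Nat.cast_pow, ← Nat.cast_mul, hkr, ZMod.natCast_self, zero_mul]
  · intro m1 m2 h
    have h' : ((ℓ ^ (k - r) * (m1 : ℕ) : ℕ) : ZMod (ℓ ^ k))
        = ((ℓ ^ (k - r) * (m2 : ℕ) : ℕ) : ZMod (ℓ ^ k)) := congrArg Subtype.val h
    have hlt : ∀ m : Fin (ℓ ^ r), ℓ ^ (k - r) * (m : ℕ) < ℓ ^ k := by
      intro m
      calc ℓ ^ (k - r) * (m : ℕ) < ℓ ^ (k - r) * ℓ ^ r :=
            (Nat.mul_lt_mul_left (Nat.pow_pos hℓ.pos)).mpr m.2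
        _ = ℓ ^ k := hkr
    have := (ZMod.val_cast_of_lt (hlt m1)) ▸ (ZMod.val_cast_of_lt (hlt m2)) ▸ congrArg ZMod.val h'
    have hm : (m1 : ℕ) = (m2 : ℕ) :=
      Nat.eq_of_mul_eq_mul_left (Nat.pow_pos hℓ.pos) this
    exact Fin.ext hm
  · rintro ⟨s, hs⟩
    have hs0 : ((ℓ ^ r * s.val : ℕ) : ZMod (ℓ ^ k)) = 0 := by
      push_cast
      simpa [ZMod.natCast_val, ZMod.cast_id] using hs
    rw [ZMod.natCast_eq_zero_iff] at hs0
    have hdvd : ℓ ^ (k - r) ∣ s.val := by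
      have : ℓ ^ r * ℓ ^ (k - r) ∣ ℓ ^ r * s.val := by
        rw [show ℓ ^ r * ℓ ^ (k - r) = ℓ ^ k by rw [← pow_add]; congr 1; omega]
        exact hs0
      exact (mul_dvd_mul_iff_left (a := ℓ ^ r) (pow_ne_zero _ hℓ.ne_zero)).mp this
    obtain ⟨m, hm⟩ := hdvd
    have hmlt : m < ℓ ^ r := by
      by_contra hge
      push_neg at hge
      have : ℓ ^ k ≤ s.val := by
        rw [hm, ← hkr]
        exact Nat.mul_le_mul_left _ hge
      exact absurd (ZMod.val_lt s) (by omega)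
    refine ⟨⟨m, hmlt⟩, ?_⟩
    ext
    show ((ℓ ^ (k - r) * m : ℕ) : ZMod (ℓ ^ k)) = s
    rw [← hm]
    simp [ZMod.natCast_val, ZMod.cast_id]

end AuxIR

namespace AuxIR

lemma card_fiber (hℓ : ℓ.Prime) {r : ℕ} (hrk : r ≤ k) (z : ZMod (ℓ ^ k)) :
    Nat.card {y : ZMod (ℓ ^ k) | (ℓ : ZMod (ℓ ^ k)) ^ r * y = (ℓ : ZMod (ℓ ^ k)) ^ r * z}
      = ℓ ^ r := by
  rw [← card_ker hℓ hrk]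
  apply Nat.card_congr
  refine ⟨fun y => ⟨y.1 - z, ?_⟩, fun s => ⟨s.1 + z, ?_⟩, ?_, ?_⟩
  · have := y.2
    simp only [Set.mem_setOf_eq] at this ⊢
    rw [mul_sub, this, sub_self]
  · have := s.2
    simp only [Set.mem_setOf_eq] at this ⊢
    rw [mul_add, this, zero_add]
  · intro y; ext; simp
  · intro s; ext; simp

lemma card_pairs_unit (hℓ : ℓ.Prime) {r : ℕ} (hrk : r ≤ k) (β0 β1 z : ZMod (ℓ ^ k))
    (hu : IsUnit β0) :
    Nat.card {p : ZMod (ℓ ^ k) × ZMod (ℓ ^ k) |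
      (ℓ : ZMod (ℓ ^ k)) ^ r * (β0 * p.2 + β1 * p.1) = (ℓ : ZMod (ℓ ^ k)) ^ r * z}
      = ℓ ^ (k + r) := by
  obtain ⟨u, hu⟩ := hu
  subst hu
  have hcard : Nat.card ((ZMod (ℓ ^ k)) ×
      {y : ZMod (ℓ ^ k) | (ℓ : ZMod (ℓ ^ k)) ^ r * y = (ℓ : ZMod (ℓ ^ k)) ^ r * z})
      = ℓ ^ (k + r) := by
    rw [Nat.card_prod, Nat.card_zmod, card_fiber hℓ hrk, pow_add]
  rw [← hcard]
  apply Nat.card_congr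
  refine ⟨fun p => (p.1.1, ⟨(↑u : ZMod (ℓ ^ k)) * p.1.2 + β1 * p.1.1, p.2⟩),
    fun q => ⟨(q.1, (↑u⁻¹ : ZMod (ℓ ^ k)) * (q.2.1 - β1 * q.1)), ?_⟩, ?_, ?_⟩
  · show (ℓ : ZMod (ℓ ^ k)) ^ r * ((↑u : ZMod (ℓ ^ k)) * _ + β1 * _) = _
    have : (↑u : ZMod (ℓ ^ k)) * ((↑u⁻¹ : ZMod (ℓ ^ k)) * (q.2.1 - β1 * q.1)) + β1 * q.1
        = q.2.1 := by
      rw [← mul_assoc, Units.mul_inv, one_mul, sub_add_cancel]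
    rw [this]
    exact q.2.2
  · intro p
    ext
    · rfl
    · show (↑u⁻¹ : ZMod (ℓ ^ k)) * (((↑u : ZMod (ℓ ^ k)) * p.1.2 + β1 * p.1.1) - β1 * p.1.1)
        = p.1.2
      rw [add_sub_cancel_right, ← mul_assoc, Units.inv_mul, one_mul]
  · intro q
    ext
    · rfl
    · show (↑u : ZMod (ℓ ^ k)) * ((↑u⁻¹ : ZMod (ℓ ^ k)) * (q.2.1 - β1 * q.1)) + β1 * q.1 = q.2.1
      rw [← mul_assoc, Units.mul_inv, one_mul, sub_add_cancel]

lemma card_pairs (hℓ : ℓ.Prime) {r : ℕ} (hrk : r ≤ k) (β0 β1 z : ZMod (ℓ ^ k))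
    (h : r = k ∨ IsUnit β0 ∨ IsUnit β1) :
    Nat.card {p : ZMod (ℓ ^ k) × ZMod (ℓ ^ k) |
      (ℓ : ZMod (ℓ ^ k)) ^ r * (β0 * p.2 + β1 * p.1) = (ℓ : ZMod (ℓ ^ k)) ^ r * z}
      = ℓ ^ (k + r) := by
  rcases h with hrk' | hu | hu
  · have h0 : (ℓ : ZMod (ℓ ^ k)) ^ r = 0 := by
      rw [hrk', ← Nat.cast_pow, ZMod.natCast_self]
    have hset : {p : ZMod (ℓ ^ k) × ZMod (ℓ ^ k) |
        (ℓ : ZMod (ℓ ^ k)) ^ r * (β0 * p.2 + β1 * p.1) = (ℓ : ZMod (ℓ ^ k)) ^ r * z}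
        = Set.univ := by
      ext p; simp [h0]
    rw [hset, Nat.card_congr (Equiv.Set.univ _), Nat.card_prod, Nat.card_zmod, ← pow_add,
      hrk']
  · exact card_pairs_unit hℓ hrk β0 β1 z hu
  · rw [← card_pairs_unit hℓ hrk β1 β0 z hu]
    apply Nat.card_congr
    refine Equiv.subtypeEquiv (Equiv.prodComm _ _) (fun p => ?_)
    simp [add_comm]

end AuxIR

namespace AuxIR

lemma em_eq : em ℓ k D = algebraMap (ZMod (ℓ ^ k)) (InertRing ℓ k D) := rfl

lemma ex_unit_iff [Nontrivial (ZMod (ℓ ^ k))] (s t : ZMod (ℓ ^ k)) :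
    (∃ u : (ZMod (ℓ ^ k))ˣ, em ℓ k D s + em ℓ k D t * alphaI ℓ k D = em ℓ k D (u : ZMod (ℓ ^ k)))
      ↔ IsUnit s ∧ t = 0 := by
  constructor
  · rintro ⟨u, h⟩
    have h' : em ℓ k D s + em ℓ k D t * alphaI ℓ k D
        = em ℓ k D (u : ZMod (ℓ ^ k)) + em ℓ k D 0 * alphaI ℓ k D := by
      rw [h]; simp
    obtain ⟨h1, h2⟩ := repr_unique h'
    exact ⟨h1 ▸ u.isUnit, h2⟩
  · rintro ⟨hs, rfl⟩
    exact ⟨hs.unit, by simp [hs.unit_spec]⟩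

lemma b_struct (hℓ : ℓ.Prime) (hk : 1 ≤ k) [Nontrivial (ZMod (ℓ ^ k))] {r : ℕ}
    (hr1 : 1 ≤ r) (hrk : r ≤ k) {b : InertRing ℓ k D} (hb : vR ℓ k D b = r) :
    ∃ β0 β1 : ZMod (ℓ ^ k),
      b = em ℓ k D ((ℓ : ZMod (ℓ ^ k)) ^ r * β0)
          + em ℓ k D ((ℓ : ZMod (ℓ ^ k)) ^ r * β1) * alphaI ℓ k D
      ∧ (r = k ∨ IsUnit β0 ∨ IsUnit β1) := by
  classical
  set P : ℕ → Prop := fun t => ∃ y : InertRing ℓ k D, b = (ℓ : InertRing ℓ k D) ^ t * y with hP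
  have hP0 : P 0 := ⟨b, by simp⟩
  have hPr : P r := by
    rw [← hb]
    exact Nat.findGreatest_spec (Nat.zero_le k) hP0
  obtain ⟨y, hy⟩ := hPr
  obtain ⟨y0, y1, hy'⟩ := repr_ex y
  have hrepr : b = em ℓ k D ((ℓ : ZMod (ℓ ^ k)) ^ r * y0)
      + em ℓ k D ((ℓ : ZMod (ℓ ^ k)) ^ r * y1) * alphaI ℓ k D := by
    rw [hy, hy', ell_pow_eq]
    simp only [_root_.map_mul, map_pow, map_natCast]
    ring
  refine ⟨y0, y1, hrepr, ?_⟩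
  by_cases hrk' : r = k
  · exact Or.inl hrk'
  · right
    by_contra hcon
    push_neg at hcon
    obtain ⟨h0, h1⟩ := hcon
    obtain ⟨γ0, hγ0⟩ := (zmod_unit_or hℓ hk y0).resolve_left h0
    obtain ⟨γ1, hγ1⟩ := (zmod_unit_or hℓ hk y1).resolve_left h1
    have hP1 : P (r + 1) := by
      refine ⟨em ℓ k D γ0 + em ℓ k D γ1 * alphaI ℓ k D, ?_⟩
      rw [hrepr, hγ0, hγ1, ell_pow_eq (r := r + 1)]
      simp only [_root_.map_mul, map_pow, map_natCast]
      ring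
    have hng : ¬ P (r + 1) := Nat.findGreatest_is_greatest
      (by rw [show Nat.findGreatest P k = vR ℓ k D b from rfl, hb]; omega) (by omega)
    exact hng hP1

end AuxIR

namespace AuxIR

lemma zmod_isUnit_sub_pow_mul {r : ℕ} (hr : 1 ≤ r) (u w : ZMod (ℓ ^ k)) (hu : IsUnit u) :
    IsUnit (u - (ℓ : ZMod (ℓ ^ k)) ^ r * w) := by
  have h : u - (ℓ : ZMod (ℓ ^ k)) ^ r * w = u + (ℓ : ZMod (ℓ ^ k)) ^ r * (-w) := by ring
  rw [h]
  exact zmod_isUnit_add_pow_mul hr _ _ hu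

end AuxIR

/-- For `b` of valuation `r` (`1 ≤ r ≤ k`), there exists `c` with
`[[a,b],[c,d]] ∈ 𝒜ᵗ_{ℓᵏ,I}` iff the two conditions on `(a,d)` hold; and in that
case there are exactly `ℓ^(k+r)` such `c`. -/
theorem stmt_13 (ℓ k : ℕ) (hℓ : ℓ.Prime) (hodd : ℓ ≠ 2) (hk : 1 ≤ k) (D : ℤ)
    (hD : ¬ IsSquare (D : ZMod ℓ)) (r : ℕ) (hr1 : 1 ≤ r) (hrk : r ≤ k)
    (a d b : InertRing ℓ k D) (hb : vR ℓ k D b = r) :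
    ((∃ c : InertRing ℓ k D, memAt ℓ k D !![a, b; c, d]) ↔ pairCond ℓ k D r a d) ∧
    (pairCond ℓ k D r a d →
      Nat.card {c : InertRing ℓ k D | memAt ℓ k D !![a, b; c, d]} = ℓ ^ (k + r)) := by
  haveI : Fact (1 < ℓ ^ k) := ⟨Nat.one_lt_pow (by omega) hℓ.one_lt⟩
  obtain ⟨β0, β1, hbe, hβ⟩ := AuxIR.b_struct hℓ hk hr1 hrk hb
  obtain ⟨s, t, hst⟩ := AuxIR.repr_ex (a * d)
  have hdet : ∀ c0 c1 : ZMod (ℓ ^ k),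
      (!![a, b; AuxIR.em ℓ k D c0 + AuxIR.em ℓ k D c1 * alphaI ℓ k D, d]).det
        = AuxIR.em ℓ k D
            (s - (ℓ : ZMod (ℓ ^ k)) ^ r * (β0 * c0 + (D : ZMod (ℓ ^ k)) * β1 * c1))
          + AuxIR.em ℓ k D (t - (ℓ : ZMod (ℓ ^ k)) ^ r * (β0 * c1 + β1 * c0))
            * alphaI ℓ k D := by
    intro c0 c1
    rw [Matrix.det_fin_two_of, hst, hbe, AuxIR.mul_repr]
    simp only [map_sub, map_add, _root_.map_mul, map_pow, map_natCast]
    ring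
  have hmem : ∀ c0 c1 : ZMod (ℓ ^ k),
      memAt ℓ k D !![a, b; AuxIR.em ℓ k D c0 + AuxIR.em ℓ k D c1 * alphaI ℓ k D, d]
        ↔ ((IsUnit (s - (ℓ : ZMod (ℓ ^ k)) ^ r * (β0 * c0 + (D : ZMod (ℓ ^ k)) * β1 * c1))
            ∧ t = (ℓ : ZMod (ℓ ^ k)) ^ r * (β0 * c1 + β1 * c0))
          ∧ ∃ w : ZMod (ℓ ^ k), a + d = AuxIR.em ℓ k D w) := by
    intro c0 c1
    unfold memAt
    rw [← AuxIR.em_eq, hdet c0 c1, Matrix.trace_fin_two_of, AuxIR.ex_unit_iff, sub_eq_zero]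
  have hpair : pairCond ℓ k D r a d
      ↔ ((IsUnit s ∧ ∃ z : ZMod (ℓ ^ k), t = (ℓ : ZMod (ℓ ^ k)) ^ r * z)
        ∧ ∃ w : ZMod (ℓ ^ k), a + d = AuxIR.em ℓ k D w) := by
    unfold pairCond
    rw [← AuxIR.em_eq]
    constructor
    · rintro ⟨⟨u, z, h1⟩, h2⟩
      have h' : AuxIR.em ℓ k D s + AuxIR.em ℓ k D t * alphaI ℓ k D
          = AuxIR.em ℓ k D (u : ZMod (ℓ ^ k))
            + AuxIR.em ℓ k D ((ℓ : ZMod (ℓ ^ k)) ^ r * z) * alphaI ℓ k D := by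
        rw [← hst, h1, AuxIR.ell_pow_eq]
        simp only [_root_.map_mul, map_pow, map_natCast]
        ring
      obtain ⟨e1, e2⟩ := AuxIR.repr_unique h'
      exact ⟨⟨e1 ▸ u.isUnit, ⟨z, e2⟩⟩, h2⟩
    · rintro ⟨⟨hs, z, ht⟩, h2⟩
      refine ⟨⟨hs.unit, z, ?_⟩, h2⟩
      rw [hst, IsUnit.unit_spec, ht, AuxIR.ell_pow_eq]
      simp only [_root_.map_mul, map_pow, map_natCast]
      ring
  constructor
  · constructor
    · rintro ⟨c, hc⟩
      obtain ⟨c0, c1, hcc⟩ := AuxIR.repr_ex c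
      rw [hcc] at hc
      obtain ⟨⟨hu0, ht0⟩, htr⟩ := (hmem c0 c1).mp hc
      refine hpair.mpr ⟨⟨?_, ⟨β0 * c1 + β1 * c0, ht0⟩⟩, htr⟩
      have hh : s = (s - (ℓ : ZMod (ℓ ^ k)) ^ r * (β0 * c0 + (D : ZMod (ℓ ^ k)) * β1 * c1))
          + (ℓ : ZMod (ℓ ^ k)) ^ r * (β0 * c0 + (D : ZMod (ℓ ^ k)) * β1 * c1) := by ring
      rw [hh]
      exact AuxIR.zmod_isUnit_add_pow_mul hr1 _ _ hu0
    · intro hp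
      obtain ⟨⟨hs, z, ht⟩, htr⟩ := hpair.mp hp
      rcases hβ with hrk' | hu | hu
      · refine ⟨AuxIR.em ℓ k D 0 + AuxIR.em ℓ k D 0 * alphaI ℓ k D, (hmem 0 0).mpr ⟨⟨?_, ?_⟩, htr⟩⟩
        · exact AuxIR.zmod_isUnit_sub_pow_mul hr1 s _ hs
        · have h0 : (ℓ : ZMod (ℓ ^ k)) ^ r = 0 := by
            rw [hrk', ← Nat.cast_pow, ZMod.natCast_self]
          rw [ht, h0, zero_mul, zero_mul]
      · obtain ⟨u, hu⟩ := hu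
        refine ⟨AuxIR.em ℓ k D 0 + AuxIR.em ℓ k D ((↑u⁻¹ : ZMod (ℓ ^ k)) * z) * alphaI ℓ k D,
          (hmem 0 ((↑u⁻¹ : ZMod (ℓ ^ k)) * z)).mpr ⟨⟨?_, ?_⟩, htr⟩⟩
        · exact AuxIR.zmod_isUnit_sub_pow_mul hr1 s _ hs
        · rw [ht]
          congr 1
          rw [← hu, ← mul_assoc, Units.mul_inv, one_mul, mul_zero, add_zero]
      · obtain ⟨u, hu⟩ := hu
        refine ⟨AuxIR.em ℓ k D ((↑u⁻¹ : ZMod (ℓ ^ k)) * z) + AuxIR.em ℓ k D 0 * alphaI ℓ k D,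
          (hmem ((↑u⁻¹ : ZMod (ℓ ^ k)) * z) 0).mpr ⟨⟨?_, ?_⟩, htr⟩⟩
        · exact AuxIR.zmod_isUnit_sub_pow_mul hr1 s _ hs
        · rw [ht]
          congr 1
          rw [← hu, ← mul_assoc, Units.mul_inv, one_mul, mul_zero, zero_add]
  · intro hp
    obtain ⟨⟨hs, z, ht⟩, htr⟩ := hpair.mp hp
    have hbij : Function.Bijective (fun p : ZMod (ℓ ^ k) × ZMod (ℓ ^ k) =>
        AuxIR.em ℓ k D p.1 + AuxIR.em ℓ k D p.2 * alphaI ℓ k D) := by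
      constructor
      · rintro ⟨x, y⟩ ⟨x', y'⟩ h
        obtain ⟨e1, e2⟩ := AuxIR.repr_unique h
        simp only [Prod.mk.injEq]
        exact ⟨e1, e2⟩
      · intro w
        obtain ⟨x, y, hxy⟩ := AuxIR.repr_ex w
        exact ⟨(x, y), hxy.symm⟩
    rw [← AuxIR.card_pairs hℓ hrk β0 β1 z hβ]
    apply Nat.card_congr
    refine (Equiv.subtypeEquiv (Equiv.ofBijective _ hbij) (fun p => ?_)).symm
    show (ℓ : ZMod (ℓ ^ k)) ^ r * (β0 * p.2 + β1 * p.1) = (ℓ : ZMod (ℓ ^ k)) ^ r * z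
      ↔ memAt ℓ k D !![a, b; AuxIR.em ℓ k D p.1 + AuxIR.em ℓ k D p.2 * alphaI ℓ k D, d]
    rw [hmem p.1 p.2]
    constructor
    · intro h
      exact ⟨⟨AuxIR.zmod_isUnit_sub_pow_mul hr1 s _ hs, ht.trans h.symm⟩, htr⟩
    · rintro ⟨⟨_, h2⟩, _⟩
      rw [← h2, ht]
end

section
/- Let ℓ be a prime, k ≥ 1, and D any integer. Let R_k = (ℤ/ℓᵏℤ)[X]/(X² − D), and let Mᵗ_{ℓᵏ} = {σ ∈ M₂(R_k) | tr σ lies in the image of ℤ/ℓᵏℤ and det σ lies in the image of ℤ/ℓᵏℤ}, where M₂(R_k) is the set of all 2×2 matrices over R_k. Then #Mᵗ_{ℓᵏ} ≤ 3·ℓ^{6k}. -/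
open Matrix Polynomial

set_option linter.unusedSectionVars false

namespace Stmt15Aux

variable {n : ℕ} [NeZero n] [Fact (1 < n)] {d : ZMod n}

noncomputable def pb (d : ZMod n) : PowerBasis (ZMod n) (AdjoinRoot (X ^ 2 - C d)) :=
  AdjoinRoot.powerBasis' (monic_X_pow_sub_C d two_ne_zero)

lemma pb_dim (d : ZMod n) : (pb d).dim = 2 := natDegree_X_pow_sub_C

noncomputable def bas (d : ZMod n) :
    Module.Basis (Fin 2) (ZMod n) (AdjoinRoot (X ^ 2 - C d)) :=
  ((pb d).basis).reindex (finCongr (pb_dim d))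

noncomputable abbrev rt (d : ZMod n) : AdjoinRoot (X ^ 2 - C d) := AdjoinRoot.root _

lemma bas_apply (i : Fin 2) : bas d i = rt d ^ (i : ℕ) := by
  rw [bas, Module.Basis.reindex_apply, PowerBasis.coe_basis]
  simp [pb]
  rfl

noncomputable def c0 (r : AdjoinRoot (X ^ 2 - C d)) : ZMod n := (bas d).repr r 0
noncomputable def c1 (r : AdjoinRoot (X ^ 2 - C d)) : ZMod n := (bas d).repr r 1

lemma expand (r : AdjoinRoot (X ^ 2 - C d)) :
    r = algebraMap (ZMod n) _ (c0 r) + algebraMap (ZMod n) _ (c1 r) * rt d := by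
  conv_lhs => rw [← (bas d).sum_repr r]
  rw [Fin.sum_univ_two, bas_apply 0, bas_apply 1]
  simp [Algebra.smul_def, c0, c1]

lemma coords_ext {r r' : AdjoinRoot (X ^ 2 - C d)} (h0 : c0 r = c0 r')
    (h1 : c1 r = c1 r') : r = r' := by
  rw [expand r, expand r', h0, h1]

lemma key_eq (u v : ZMod n) :
    algebraMap (ZMod n) (AdjoinRoot (X ^ 2 - C d)) u
        + algebraMap (ZMod n) _ v * rt d = u • bas d 0 + v • bas d 1 := by
  rw [bas_apply 0, bas_apply 1]
  simp [Algebra.smul_def]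

lemma c0_repr (u v : ZMod n) :
    c0 (algebraMap (ZMod n) (AdjoinRoot (X ^ 2 - C d)) u
        + algebraMap (ZMod n) _ v * rt d) = u := by
  rw [c0, key_eq]
  simp [Module.Basis.repr_self, Finsupp.single_apply]

lemma c1_repr (u v : ZMod n) :
    c1 (algebraMap (ZMod n) (AdjoinRoot (X ^ 2 - C d)) u
        + algebraMap (ZMod n) _ v * rt d) = v := by
  rw [c1, key_eq]
  simp [Module.Basis.repr_self, Finsupp.single_apply]

lemma c0_alg (z : ZMod n) :
    c0 (algebraMap (ZMod n) (AdjoinRoot (X ^ 2 - C d)) z) = z := by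
  have := c0_repr (d := d) z 0
  simpa using this

lemma c1_alg (z : ZMod n) :
    c1 (algebraMap (ZMod n) (AdjoinRoot (X ^ 2 - C d)) z) = 0 := by
  have := c1_repr (d := d) z 0
  simpa using this

lemma c0_add (r r' : AdjoinRoot (X ^ 2 - C d)) : c0 (r + r') = c0 r + c0 r' := by
  simp [c0, map_add]

lemma c1_add (r r' : AdjoinRoot (X ^ 2 - C d)) : c1 (r + r') = c1 r + c1 r' := by
  simp [c1, map_add]

lemma c1_sub (r r' : AdjoinRoot (X ^ 2 - C d)) : c1 (r - r') = c1 r - c1 r' := by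
  simp [c1, map_sub]

lemma rt_sq : rt d * rt d = algebraMap (ZMod n) _ d := by
  have h := AdjoinRoot.mk_self (f := X ^ 2 - C d)
  rw [map_sub, map_pow, AdjoinRoot.mk_X, AdjoinRoot.mk_C, sub_eq_zero] at h
  rw [← pow_two, h, AdjoinRoot.algebraMap_eq]

lemma mul_repr (u v u' v' : ZMod n) :
    (algebraMap (ZMod n) (AdjoinRoot (X ^ 2 - C d)) u + algebraMap (ZMod n) _ v * rt d)
      * (algebraMap (ZMod n) _ u' + algebraMap (ZMod n) _ v' * rt d)
    = algebraMap (ZMod n) _ (u * u' + d * v * v')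
        + algebraMap (ZMod n) _ (u * v' + v * u') * rt d := by
  simp only [map_add, _root_.map_mul]
  linear_combination (algebraMap (ZMod n) (AdjoinRoot (X ^ 2 - C d)) v
    * algebraMap (ZMod n) (AdjoinRoot (X ^ 2 - C d)) v') * rt_sq (d := d)

lemma c1_mul (r r' : AdjoinRoot (X ^ 2 - C d)) :
    c1 (r * r') = c0 r * c1 r' + c1 r * c0 r' := by
  conv_lhs => rw [expand r, expand r', mul_repr]
  rw [c1_repr]

lemma exists_iff (r : AdjoinRoot (X ^ 2 - C d)) :
    (∃ z : ZMod n, r = algebraMap (ZMod n) _ z) ↔ c1 r = 0 := by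
  constructor
  · rintro ⟨z, rfl⟩; exact c1_alg z
  · intro h
    refine ⟨c0 r, ?_⟩
    conv_lhs => rw [expand r]
    rw [h]
    simp

lemma finiteR : Finite (AdjoinRoot (X ^ 2 - C d)) :=
  Finite.of_equiv _ (bas d).equivFun.toEquiv.symm


lemma isUnit_of_not_dvd {ℓ m : ℕ} (hℓ : ℓ.Prime) [NeZero (ℓ ^ m)] {x : ZMod (ℓ ^ m)}
    (h : ¬ ℓ ∣ x.val) : IsUnit x := by
  have h2 : IsUnit ((x.val : ℕ) : ZMod (ℓ ^ m)) := by
    rw [ZMod.isUnit_iff_coprime]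
    exact Nat.Coprime.pow_right _ ((hℓ.coprime_iff_not_dvd.mpr h).symm)
  rwa [ZMod.natCast_rightInverse x] at h2

lemma key (ℓ : ℕ) (hℓ : ℓ.Prime) : ∀ (k : ℕ) [NeZero (ℓ ^ k)] (t : ZMod (ℓ ^ k)),
    (Finset.univ.filter (fun q : ZMod (ℓ ^ k) × ZMod (ℓ ^ k) × ZMod (ℓ ^ k) × ZMod (ℓ ^ k) =>
      q.1 * q.2.2.1 + q.2.1 * q.2.2.2 = t)).card ≤ 2 * ℓ ^ (3 * k) := by
  haveI : NeZero ℓ := ⟨hℓ.ne_zero⟩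
  intro k
  induction k with
  | zero =>
    intro _ t
    refine le_trans (Finset.card_filter_le _ _) ?_
    rw [Finset.card_univ]
    simp
  | succ k ih' =>
    intro _ t
    haveI h2 : NeZero (ℓ ^ k) := ⟨pow_ne_zero _ hℓ.ne_zero⟩
    classical
    set S : Finset (ZMod (ℓ ^ (k+1)) × ZMod (ℓ ^ (k+1)) × ZMod (ℓ ^ (k+1)) × ZMod (ℓ ^ (k+1))) :=
      Finset.univ.filter (fun q => q.1 * q.2.2.1 + q.2.1 * q.2.2.2 = t) with hS
    set P : (ZMod (ℓ ^ (k+1)) × ZMod (ℓ ^ (k+1)) × ZMod (ℓ ^ (k+1)) × ZMod (ℓ ^ (k+1))) → Prop :=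
      (fun q => ℓ ∣ q.1.val ∧ ℓ ∣ q.2.1.val) with hP
    have hsplit := Finset.card_filter_add_card_filter_not (s := S) (p := P)
    -- Part A : at least one of the first two coordinates is a unit
    have hA : (S.filter (fun q => ¬ P q)).card ≤ ℓ ^ (3 * (k+1)) := by
      have hle : (S.filter (fun q => ¬ P q)).card ≤ (Finset.univ :
          Finset (ZMod (ℓ ^ (k+1)) × ZMod (ℓ ^ (k+1)) × ZMod (ℓ ^ (k+1)))).card := by
        apply Finset.card_le_card_of_injOn
          (fun q => (q.1, q.2.1, if ℓ ∣ q.1.val then q.2.2.1 else q.2.2.2))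
        · exact fun q _ => Finset.mem_univ _
        · rintro ⟨a, b, x, y⟩ hq ⟨a', b', x', y'⟩ hq' heq
          simp only [Finset.coe_filter, Set.mem_setOf_eq, hS, hP, Finset.mem_filter,
            Finset.mem_univ, true_and] at hq hq'
          obtain ⟨heqn, hnP⟩ := hq
          obtain ⟨heqn', hnP'⟩ := hq'
          simp only [Prod.mk.injEq] at heq
          obtain ⟨rfl, rfl, hw⟩ := heq
          by_cases hd : ℓ ∣ a.val
          · simp only [hd, if_true] at hw
            subst hw
            have hbu : IsUnit b := isUnit_of_not_dvd hℓ (fun hb => hnP ⟨hd, hb⟩)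
            have : b * y = b * y' := by
              have h3 := heqn.trans heqn'.symm
              exact add_left_cancel h3
            have := hbu.mul_left_cancel this
            simp [this]
          · simp only [hd, if_false] at hw
            subst hw
            have hau : IsUnit a := isUnit_of_not_dvd hℓ hd
            have : a * x = a * x' := by
              have h3 := heqn.trans heqn'.symm
              exact add_right_cancel h3
            have := hau.mul_left_cancel this
            simp [this]
      calc (S.filter (fun q => ¬ P q)).card
          ≤ _ := hle
        _ = ℓ ^ (3 * (k+1)) := by
          rw [Finset.card_univ]
          simp only [Fintype.card_prod, ZMod.card]
          ring
    -- Part B : both first coordinates divisible by ℓ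
    have hB : (S.filter P).card ≤ 2 * ℓ ^ (3 * k) * (ℓ * ℓ) := by
      set t' : ZMod (ℓ ^ k) := ((t.val / ℓ : ℕ) : ZMod (ℓ ^ k)) with ht'
      set T := (Finset.univ.filter
          (fun q : ZMod (ℓ ^ k) × ZMod (ℓ ^ k) × ZMod (ℓ ^ k) × ZMod (ℓ ^ k) =>
            q.1 * q.2.2.1 + q.2.1 * q.2.2.2 = t')) ×ˢ
          (Finset.univ : Finset (ZMod ℓ × ZMod ℓ)) with hT
      have hle : (S.filter P).card ≤ T.card := by
        apply Finset.card_le_card_of_injOn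
          (fun q => (( ((q.1.val / ℓ : ℕ) : ZMod (ℓ ^ k)),
                       ((q.2.1.val / ℓ : ℕ) : ZMod (ℓ ^ k)),
                       ((q.2.2.1.val : ℕ) : ZMod (ℓ ^ k)),
                       ((q.2.2.2.val : ℕ) : ZMod (ℓ ^ k))),
                     ( ((q.2.2.1.val / ℓ ^ k : ℕ) : ZMod ℓ),
                       ((q.2.2.2.val / ℓ ^ k : ℕ) : ZMod ℓ))))
        · rintro ⟨a, b, x, y⟩ hq
          simp only [hS, hP, Finset.mem_coe, Finset.mem_filter, Finset.mem_univ, true_and] at hq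
          obtain ⟨heqn, hda, hdb⟩ := hq
          rw [hT, Finset.mem_coe, Finset.mem_product]
          refine ⟨?_, Finset.mem_univ _⟩
          simp only [Finset.mem_filter, Finset.mem_univ, true_and]
          -- the congruence modulo ℓ^(k+1)
          have hmodn : a.val * x.val + b.val * y.val ≡ t.val [MOD ℓ ^ (k+1)] := by
            rw [← ZMod.natCast_eq_natCast_iff]
            push_cast
            rw [ZMod.natCast_rightInverse a, ZMod.natCast_rightInverse x,
              ZMod.natCast_rightInverse b, ZMod.natCast_rightInverse y,
              ZMod.natCast_rightInverse t]
            exact heqn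
          have hdt : ℓ ∣ t.val := by
            have hsum : ℓ ∣ a.val * x.val + b.val * y.val :=
              dvd_add (hda.mul_right _) (hdb.mul_right _)
            have hmod : a.val * x.val + b.val * y.val ≡ t.val [MOD ℓ] :=
              hmodn.of_dvd (dvd_pow_self ℓ (Nat.succ_ne_zero k))
            have h0 : a.val * x.val + b.val * y.val ≡ 0 [MOD ℓ] :=
              (Nat.modEq_zero_iff_dvd).mpr hsum
            exact (Nat.modEq_zero_iff_dvd).mp (hmod.symm.trans h0)
          obtain ⟨A, hAa⟩ := hda
          obtain ⟨B, hBb⟩ := hdb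
          obtain ⟨Tv, hTt⟩ := hdt
          have hstep : A * x.val + B * y.val ≡ Tv [MOD ℓ ^ k] := by
            apply Nat.ModEq.mul_left_cancel' (c := ℓ) hℓ.ne_zero
            have e1 : ℓ * (A * x.val + B * y.val) = a.val * x.val + b.val * y.val := by
              rw [hAa, hBb]; ring
            have e2 : ℓ * Tv = t.val := hTt.symm
            rw [e1, e2, ← pow_succ']
            exact hmodn
          have hgoal : ((A : ZMod (ℓ ^ k)) * (x.val : ZMod (ℓ ^ k))
              + (B : ZMod (ℓ ^ k)) * (y.val : ZMod (ℓ ^ k))) = (Tv : ZMod (ℓ ^ k)) := by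
            have := (ZMod.natCast_eq_natCast_iff _ _ _).mpr hstep
            push_cast at this
            exact this
          have hAdiv : a.val / ℓ = A := by rw [hAa, Nat.mul_div_cancel_left _ hℓ.pos]
          have hBdiv : b.val / ℓ = B := by rw [hBb, Nat.mul_div_cancel_left _ hℓ.pos]
          have hTdiv : t.val / ℓ = Tv := by rw [hTt, Nat.mul_div_cancel_left _ hℓ.pos]
          rw [hAdiv, hBdiv, ht', hTdiv]
          exact hgoal
        · rintro ⟨a, b, x, y⟩ hq ⟨a', b', x', y'⟩ hq' heq
          simp only [Finset.coe_filter, Set.mem_setOf_eq, hS, hP, Finset.mem_filter,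
            Finset.mem_univ, true_and] at hq hq'
          obtain ⟨heqn, hda, hdb⟩ := hq
          obtain ⟨heqn', hda', hdb'⟩ := hq'
          simp only [Prod.mk.injEq] at heq
          obtain ⟨⟨e1, e2, e3, e4⟩, e5, e6⟩ := heq
          have hva : a.val < ℓ ^ (k + 1) := ZMod.val_lt a
          have hva' : a'.val < ℓ ^ (k + 1) := ZMod.val_lt a'
          have hvb : b.val < ℓ ^ (k + 1) := ZMod.val_lt b
          have hvb' : b'.val < ℓ ^ (k + 1) := ZMod.val_lt b'
          have hvx : x.val < ℓ ^ (k + 1) := ZMod.val_lt x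
          have hvx' : x'.val < ℓ ^ (k + 1) := ZMod.val_lt x'
          have hvy : y.val < ℓ ^ (k + 1) := ZMod.val_lt y
          have hvy' : y'.val < ℓ ^ (k + 1) := ZMod.val_lt y'
          have hps : ℓ ^ (k + 1) = ℓ ^ k * ℓ := by rw [pow_succ]
          -- recover a
          have hdivlt : ∀ m : ℕ, m < ℓ ^ (k+1) → m / ℓ < ℓ ^ k := by
            intro m hm
            rw [Nat.div_lt_iff_lt_mul hℓ.pos]
            exact hm.trans_eq (by ring)
          have ea : a.val / ℓ = a'.val / ℓ := by
            have := congrArg ZMod.val e1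
            rwa [ZMod.val_natCast_of_lt (hdivlt _ hva),
              ZMod.val_natCast_of_lt (hdivlt _ hva')] at this
          have hav : a.val = a'.val := by
            obtain ⟨A, hA⟩ := hda
            obtain ⟨A', hA'⟩ := hda'
            rw [hA, hA'] at ea ⊢
            rw [Nat.mul_div_cancel_left _ hℓ.pos, Nat.mul_div_cancel_left _ hℓ.pos] at ea
            rw [ea]
          have haa : a = a' := by
            rw [← ZMod.natCast_rightInverse a, ← ZMod.natCast_rightInverse a', hav]
          have eb : b.val / ℓ = b'.val / ℓ := by
            have := congrArg ZMod.val e2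
            rwa [ZMod.val_natCast_of_lt (hdivlt _ hvb),
              ZMod.val_natCast_of_lt (hdivlt _ hvb')] at this
          have hbv : b.val = b'.val := by
            obtain ⟨B, hB⟩ := hdb
            obtain ⟨B', hB'⟩ := hdb'
            rw [hB, hB'] at eb ⊢
            rw [Nat.mul_div_cancel_left _ hℓ.pos, Nat.mul_div_cancel_left _ hℓ.pos] at eb
            rw [eb]
          have hbb : b = b' := by
            rw [← ZMod.natCast_rightInverse b, ← ZMod.natCast_rightInverse b', hbv]
          -- recover x from e3 (mod ℓ^k) and e5 (div ℓ^k)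
          have hdivlt2 : ∀ m : ℕ, m < ℓ ^ (k+1) → m / ℓ ^ k < ℓ := by
            intro m hm
            rw [Nat.div_lt_iff_lt_mul (pow_pos hℓ.pos k)]
            exact hm.trans_eq (by ring)
          have ex1 : x.val % ℓ ^ k = x'.val % ℓ ^ k := by
            have := congrArg ZMod.val e3
            rwa [ZMod.val_natCast, ZMod.val_natCast] at this
          have ex2 : x.val / ℓ ^ k = x'.val / ℓ ^ k := by
            have := congrArg ZMod.val e5
            rwa [ZMod.val_natCast_of_lt (hdivlt2 _ hvx),
              ZMod.val_natCast_of_lt (hdivlt2 _ hvx')] at this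
          have hxv : x.val = x'.val := by
            have d1 := Nat.div_add_mod x.val (ℓ ^ k)
            have d2 := Nat.div_add_mod x'.val (ℓ ^ k)
            have p : ℓ ^ k * (x.val / ℓ ^ k) = ℓ ^ k * (x'.val / ℓ ^ k) := by rw [ex2]
            omega
          have hxx : x = x' := by
            rw [← ZMod.natCast_rightInverse x, ← ZMod.natCast_rightInverse x', hxv]
          have ey1 : y.val % ℓ ^ k = y'.val % ℓ ^ k := by
            have := congrArg ZMod.val e4
            rwa [ZMod.val_natCast, ZMod.val_natCast] at this
          have ey2 : y.val / ℓ ^ k = y'.val / ℓ ^ k := by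
            have := congrArg ZMod.val e6
            rwa [ZMod.val_natCast_of_lt (hdivlt2 _ hvy),
              ZMod.val_natCast_of_lt (hdivlt2 _ hvy')] at this
          have hyv : y.val = y'.val := by
            have d1 := Nat.div_add_mod y.val (ℓ ^ k)
            have d2 := Nat.div_add_mod y'.val (ℓ ^ k)
            have p : ℓ ^ k * (y.val / ℓ ^ k) = ℓ ^ k * (y'.val / ℓ ^ k) := by rw [ey2]
            omega
          have hyy : y = y' := by
            rw [← ZMod.natCast_rightInverse y, ← ZMod.natCast_rightInverse y', hyv]
          simp [haa, hbb, hxx, hyy]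
      have hTcard : T.card ≤ 2 * ℓ ^ (3 * k) * (ℓ * ℓ) := by
        rw [hT, Finset.card_product]
        have := ih' t'
        have hcard2 : (Finset.univ : Finset (ZMod ℓ × ZMod ℓ)).card = ℓ * ℓ := by
          rw [Finset.card_univ]
          simp [ZMod.card]
        rw [hcard2]
        exact Nat.mul_le_mul_right _ this
      exact hle.trans hTcard
    -- combine
    have harith : ℓ ^ (3 * (k+1)) + 2 * ℓ ^ (3 * k) * (ℓ * ℓ) ≤ 2 * ℓ ^ (3 * (k+1)) := by
      have h2 : 2 ≤ ℓ := hℓ.two_le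
      have he : ℓ ^ (3 * (k + 1)) = ℓ ^ (3 * k) * (ℓ * ℓ * ℓ) := by
        rw [show 3 * (k + 1) = 3 * k + 3 by ring, pow_add]
        ring
      rw [he]
      have hpos : 0 < ℓ ^ (3 * k) := pow_pos hℓ.pos _
      nlinarith
    omega

end Stmt15Aux


/-- For any prime `ℓ`, `k ≥ 1` and integer `D`, the set `Mᵗ_{ℓᵏ}` of 2×2
matrices over `R_k` whose trace and determinant lie in the image of `ℤ/ℓᵏℤ`
has at most `3·ℓ^(6k)` elements. -/
theorem stmt_15 (ℓ k : ℕ) (hℓ : ℓ.Prime) (hk : 1 ≤ k) (D : ℤ) :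
    Nat.card {σ : Matrix (Fin 2) (Fin 2) (InertRing ℓ k D) |
        (∃ z : ZMod (ℓ ^ k), σ.trace = algebraMap (ZMod (ℓ ^ k)) (InertRing ℓ k D) z) ∧
        ∃ z : ZMod (ℓ ^ k), σ.det = algebraMap (ZMod (ℓ ^ k)) (InertRing ℓ k D) z} ≤
      3 * ℓ ^ (6 * k) := by
  classical
  haveI hnz : NeZero (ℓ ^ k) := ⟨pow_ne_zero _ hℓ.ne_zero⟩
  haveI hfact : Fact (1 < ℓ ^ k) := ⟨Nat.one_lt_pow (by omega) hℓ.one_lt⟩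
  haveI hfin : Finite (InertRing ℓ k D) := Stmt15Aux.finiteR
  set n := ℓ ^ k with hn
  set d : ZMod n := (D : ZMod n) with hd
  open Stmt15Aux in
  set F7 : Finset ((ZMod n × ZMod n × ZMod n) × (ZMod n × ZMod n × ZMod n × ZMod n)) :=
    Finset.univ.filter (fun q =>
      q.2.1 * q.2.2.2.1 + q.2.2.1 * q.2.2.2.2 = q.1.2.2 * (q.1.1 - 2 * q.1.2.1)) with hF7
  have step1 : Nat.card {σ : Matrix (Fin 2) (Fin 2) (InertRing ℓ k D) |
        (∃ z : ZMod (ℓ ^ k), σ.trace = algebraMap (ZMod (ℓ ^ k)) (InertRing ℓ k D) z) ∧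
        ∃ z : ZMod (ℓ ^ k), σ.det = algebraMap (ZMod (ℓ ^ k)) (InertRing ℓ k D) z}
      ≤ Nat.card {q // q ∈ F7} := by
    apply Nat.card_le_card_of_injective
      (f := fun σp => (⟨((Stmt15Aux.c0 (σp.1 0 0 + σp.1 1 1), Stmt15Aux.c0 (σp.1 1 1),
            Stmt15Aux.c1 (σp.1 1 1)),
          (Stmt15Aux.c0 (σp.1 0 1), Stmt15Aux.c1 (σp.1 0 1),
            Stmt15Aux.c1 (σp.1 1 0), Stmt15Aux.c0 (σp.1 1 0))), by
        obtain ⟨σ, hσ⟩ := σp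
        obtain ⟨⟨z1, hz1⟩, ⟨z2, hz2⟩⟩ := hσ
        rw [Matrix.trace_fin_two] at hz1
        rw [Matrix.det_fin_two] at hz2
        have h1 : Stmt15Aux.c1 (σ 0 0) + Stmt15Aux.c1 (σ 1 1) = 0 := by
          rw [← Stmt15Aux.c1_add]
          exact (Stmt15Aux.exists_iff _).mp ⟨z1, hz1⟩
        have h2 : (Stmt15Aux.c0 (σ 0 0) * Stmt15Aux.c1 (σ 1 1)
              + Stmt15Aux.c1 (σ 0 0) * Stmt15Aux.c0 (σ 1 1))
            - (Stmt15Aux.c0 (σ 0 1) * Stmt15Aux.c1 (σ 1 0)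
              + Stmt15Aux.c1 (σ 0 1) * Stmt15Aux.c0 (σ 1 0)) = 0 := by
          rw [← Stmt15Aux.c1_mul, ← Stmt15Aux.c1_mul, ← Stmt15Aux.c1_sub]
          exact (Stmt15Aux.exists_iff _).mp ⟨z2, hz2⟩
        rw [hF7]
        simp only [Finset.mem_filter, Finset.mem_univ, true_and]
        rw [Stmt15Aux.c0_add]
        linear_combination (-1 : ZMod n) * h2 + Stmt15Aux.c0 (σ 1 1) * h1⟩ :
          {q // q ∈ F7}))
    rintro ⟨σ, hσ⟩ ⟨σ', hσ'⟩ heq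
    simp only [Subtype.mk.injEq, Prod.mk.injEq] at heq
    obtain ⟨⟨e1, e2, e3⟩, e4, e5, e6, e7⟩ := heq
    obtain ⟨⟨z1, hz1⟩, -⟩ := hσ
    obtain ⟨⟨z1', hz1'⟩, -⟩ := hσ'
    rw [Matrix.trace_fin_two] at hz1 hz1'
    have h1 : Stmt15Aux.c1 (σ 0 0) + Stmt15Aux.c1 (σ 1 1) = 0 := by
      rw [← Stmt15Aux.c1_add]; rw [hz1]; exact Stmt15Aux.c1_alg z1
    have h1' : Stmt15Aux.c1 (σ' 0 0) + Stmt15Aux.c1 (σ' 1 1) = 0 := by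
      rw [← Stmt15Aux.c1_add]; rw [hz1']; exact Stmt15Aux.c1_alg z1'
    have hdd : σ 1 1 = σ' 1 1 := Stmt15Aux.coords_ext e2 e3
    have hbb : σ 0 1 = σ' 0 1 := Stmt15Aux.coords_ext e4 e5
    have hcc : σ 1 0 = σ' 1 0 := Stmt15Aux.coords_ext e7 e6
    have haa : σ 0 0 = σ' 0 0 := by
      apply Stmt15Aux.coords_ext
      · have g1 : Stmt15Aux.c0 (σ 0 0) + Stmt15Aux.c0 (σ 1 1)
            = Stmt15Aux.c0 (σ' 0 0) + Stmt15Aux.c0 (σ' 1 1) := by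
          rw [← Stmt15Aux.c0_add, ← Stmt15Aux.c0_add]; exact e1
        rw [e2] at g1
        exact add_right_cancel g1
      · have := h1.trans h1'.symm
        rw [e3] at this
        exact add_right_cancel this
    apply Subtype.ext
    ext i j
    fin_cases i <;> fin_cases j <;> assumption
  have step2 : Nat.card {q // q ∈ F7} = F7.card := Nat.card_eq_finsetCard F7
  have step3 : F7.card ≤ n ^ 3 * (2 * ℓ ^ (3 * k)) := by
    rw [Finset.card_eq_sum_card_fiberwise (f := fun q => q.1)
      (t := (Finset.univ : Finset (ZMod n × ZMod n × ZMod n))) (fun x _ => Finset.mem_univ _)]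
    have hbound : ∀ p ∈ (Finset.univ : Finset (ZMod n × ZMod n × ZMod n)),
        (F7.filter (fun q => q.1 = p)).card ≤ 2 * ℓ ^ (3 * k) := by
      intro p _
      refine le_trans ?_ (Stmt15Aux.key ℓ hℓ k (p.2.2 * (p.1 - 2 * p.2.1)))
      apply Finset.card_le_card_of_injOn (fun q => q.2)
      · rintro ⟨p', quad⟩ hq
        simp only [hF7, Finset.mem_coe, Finset.mem_filter, Finset.mem_univ, true_and] at hq
        obtain ⟨heqn, rfl⟩ := hq
        simp only [Finset.mem_coe, Finset.mem_filter, Finset.mem_univ, true_and]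
        exact heqn
      · rintro ⟨p1, quad1⟩ hq1 ⟨p2, quad2⟩ hq2 heq
        simp only [Finset.coe_filter, Set.mem_setOf_eq, Finset.mem_filter] at hq1 hq2
        simp only at heq
        rw [Prod.ext_iff]
        exact ⟨hq1.2.trans hq2.2.symm, heq⟩
    calc ∑ p ∈ (Finset.univ : Finset (ZMod n × ZMod n × ZMod n)),
          (F7.filter (fun q => q.1 = p)).card
        ≤ ∑ _p ∈ (Finset.univ : Finset (ZMod n × ZMod n × ZMod n)), 2 * ℓ ^ (3 * k) :=
          Finset.sum_le_sum hbound
      _ = n ^ 3 * (2 * ℓ ^ (3 * k)) := by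
          rw [Finset.sum_const, Finset.card_univ]
          simp only [Fintype.card_prod, ZMod.card, smul_eq_mul]
          ring
  have harith : n ^ 3 * (2 * ℓ ^ (3 * k)) ≤ 3 * ℓ ^ (6 * k) := by
    have he : n ^ 3 * (2 * ℓ ^ (3 * k)) = 2 * ℓ ^ (6 * k) := by
      rw [hn, ← pow_mul, show 6 * k = k * 3 + 3 * k by ring, pow_add]
      ring
    rw [he]
    exact Nat.mul_le_mul_right _ (by norm_num)
  omega
end

section
/- Let ℓ be a prime, k ≥ 1, and D any integer. Let R_k = (ℤ/ℓᵏℤ)[X]/(X² − D) and 𝒜_{ℓᵏ} = {σ ∈ GL₂(R_k) | det σ lies in the image of (ℤ/ℓᵏℤ)^×}. Then #𝒜_{ℓᵏ} ≥ ℓ^{7k−3}(ℓ−1)². -/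
open Matrix Polynomial

lemma aux_coord {A : Type*} [CommRing A] [Nontrivial A] (E : A) (r s r' s' : A)
    (h : algebraMap A (AdjoinRoot ((X : A[X])^2 - C E)) r
        + algebraMap A (AdjoinRoot ((X : A[X])^2 - C E)) s * AdjoinRoot.root _
      = algebraMap A (AdjoinRoot ((X : A[X])^2 - C E)) r'
        + algebraMap A (AdjoinRoot ((X : A[X])^2 - C E)) s' * AdjoinRoot.root _) :
    r = r' ∧ s = s' := by
  have hm : ((X : A[X])^2 - C E).Monic := monic_X_pow_sub_C E two_ne_zero
  have key : ∀ a b : A, algebraMap A (AdjoinRoot ((X : A[X])^2 - C E)) a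
      + algebraMap A (AdjoinRoot ((X : A[X])^2 - C E)) b * AdjoinRoot.root _
      = AdjoinRoot.mk _ (C a + C b * X) := by
    intro a b
    rw [map_add, _root_.map_mul, AdjoinRoot.mk_X, AdjoinRoot.algebraMap_eq]
    rfl
  rw [key, key] at h
  have h2 := congrArg (AdjoinRoot.modByMonicHom hm) h
  rw [AdjoinRoot.modByMonicHom_mk, AdjoinRoot.modByMonicHom_mk,
    (Polynomial.modByMonic_eq_self_iff hm).2, (Polynomial.modByMonic_eq_self_iff hm).2] at h2
  · constructor
    · have := congrArg (fun p => Polynomial.coeff p 0) h2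
      simpa using this
    · have := congrArg (fun p => Polynomial.coeff p 1) h2
      simpa using this
  all_goals
    rw [Polynomial.degree_X_pow_sub_C (by norm_num)]
    apply lt_of_le_of_lt (Polynomial.degree_add_le _ _)
    simp only [max_lt_iff]
    constructor
    · exact lt_of_le_of_lt Polynomial.degree_C_le (by norm_num)
    · apply lt_of_le_of_lt (Polynomial.degree_mul_le _ _)
      calc (C _).degree + (X : A[X]).degree ≤ 0 + 1 := by
            gcongr; exacts [Polynomial.degree_C_le, Polynomial.degree_X_le]
        _ < 2 := by norm_num

section Aux

variable (ℓ k : ℕ) (D : ℤ)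

/-- The element `p.1 + p.2 · θ` of `R_k`. -/
noncomputable def auxElt (p : ZMod (ℓ^k) × ZMod (ℓ^k)) : InertRing ℓ k D :=
  algebraMap _ _ p.1 + algebraMap _ _ p.2 * AdjoinRoot.root _

lemma auxElt_inj [Nontrivial (ZMod (ℓ^k))] : Function.Injective (auxElt ℓ k D) := by
  intro p q h
  obtain ⟨h1, h2⟩ := aux_coord ((D : ZMod (ℓ^k))) p.1 p.2 q.1 q.2 h
  exact Prod.ext h1 h2

lemma auxEm_inj [Nontrivial (ZMod (ℓ^k))] :
    Function.Injective (algebraMap (ZMod (ℓ^k)) (InertRing ℓ k D)) := by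
  intro x y h
  have : auxElt ℓ k D (x, 0) = auxElt ℓ k D (y, 0) := by
    simp only [auxElt, map_zero, zero_mul, add_zero]
    exact h
  exact congrArg Prod.fst (auxElt_inj ℓ k D this)

/-- The injection `ZMod ℓ^(k-1) → ZMod ℓ^k`, `c ↦ ℓ·c`. -/
def auxIota (c : ZMod (ℓ^(k-1))) : ZMod (ℓ^k) := ((ℓ * c.val : ℕ) : ZMod (ℓ^k))

lemma auxIota_inj (hℓ : 0 < ℓ) (hk : 1 ≤ k) : Function.Injective (auxIota ℓ k) := by
  haveI : NeZero (ℓ^(k-1)) := ⟨pow_ne_zero _ hℓ.ne'⟩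
  haveI : NeZero (ℓ^k) := ⟨pow_ne_zero _ hℓ.ne'⟩
  intro c₁ c₂ h
  have hlt : ∀ c : ZMod (ℓ^(k-1)), ℓ * c.val < ℓ^k := by
    intro c
    calc ℓ * c.val < ℓ * ℓ^(k-1) := (Nat.mul_lt_mul_left hℓ).2 (ZMod.val_lt c)
      _ = ℓ^k := by rw [← pow_succ']; congr 1; omega
  have h' : ℓ * c₁.val = ℓ * c₂.val := by
    have := congrArg ZMod.val h
    rwa [auxIota, auxIota, ZMod.val_cast_of_lt (hlt c₁), ZMod.val_cast_of_lt (hlt c₂)] at this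
  exact ZMod.val_injective _ (Nat.eq_of_mul_eq_mul_left hℓ h')

lemma auxNil (v : ZMod (ℓ^(k-1))) :
    IsNilpotent (algebraMap (ZMod (ℓ^k)) (InertRing ℓ k D) (auxIota ℓ k v)
      * AdjoinRoot.root _) := by
  refine ⟨k, ?_⟩
  rw [mul_pow, ← map_pow]
  have hz : (auxIota ℓ k v)^k = 0 := by
    rw [auxIota, Nat.cast_mul, mul_pow, ← Nat.cast_pow, ZMod.natCast_self, zero_mul]
  rw [hz, map_zero, zero_mul]

lemma auxUnit (a₀ : (ZMod (ℓ^k))ˣ) (a₁ : ZMod (ℓ^(k-1))) :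
    IsUnit (auxElt ℓ k D (↑a₀, auxIota ℓ k a₁)) := by
  refine IsNilpotent.isUnit_add_left_of_commute (auxNil ℓ k D a₁) ?_ (Commute.all _ _)
  exact (a₀.isUnit).map (algebraMap (ZMod (ℓ^k)) (InertRing ℓ k D))

/-- The matrix `[[a, b], [c, a⁻¹(u + bc)]]`. -/
noncomputable def auxMat (u a₀ : (ZMod (ℓ^k))ˣ) (a₁ : ZMod (ℓ^(k-1)))
    (bp cp : ZMod (ℓ^k) × ZMod (ℓ^k)) : Matrix (Fin 2) (Fin 2) (InertRing ℓ k D) :=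
  !![auxElt ℓ k D (↑a₀, auxIota ℓ k a₁), auxElt ℓ k D bp;
     auxElt ℓ k D cp,
     ↑(auxUnit ℓ k D a₀ a₁).unit⁻¹ *
       (algebraMap (ZMod (ℓ^k)) (InertRing ℓ k D) ↑u + auxElt ℓ k D bp * auxElt ℓ k D cp)]

lemma auxMat_det (u a₀ : (ZMod (ℓ^k))ˣ) (a₁ : ZMod (ℓ^(k-1)))
    (bp cp : ZMod (ℓ^k) × ZMod (ℓ^k)) :
    (auxMat ℓ k D u a₀ a₁ bp cp).det
      = algebraMap (ZMod (ℓ^k)) (InertRing ℓ k D) ↑u := by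
  rw [auxMat, Matrix.det_fin_two_of, ← mul_assoc, (auxUnit ℓ k D a₀ a₁).mul_val_inv,
    one_mul, add_sub_cancel_right]

lemma auxMat_isUnit (u a₀ : (ZMod (ℓ^k))ˣ) (a₁ : ZMod (ℓ^(k-1)))
    (bp cp : ZMod (ℓ^k) × ZMod (ℓ^k)) :
    IsUnit (auxMat ℓ k D u a₀ a₁ bp cp) := by
  rw [Matrix.isUnit_iff_isUnit_det, auxMat_det]
  exact (u.isUnit).map (algebraMap (ZMod (ℓ^k)) (InertRing ℓ k D))

/-- The parametrizing type. -/
abbrev AuxT (ℓ k : ℕ) : Type :=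
  (ZMod (ℓ^k))ˣ × (ZMod (ℓ^k))ˣ × ZMod (ℓ^(k-1))
    × (ZMod (ℓ^k) × ZMod (ℓ^k)) × (ZMod (ℓ^k) × ZMod (ℓ^k))

/-- The injection into `GL₂(R_k)`. -/
noncomputable def auxF (t : AuxT ℓ k) : GL (Fin 2) (InertRing ℓ k D) :=
  (auxMat_isUnit ℓ k D t.1 t.2.1 t.2.2.1 t.2.2.2.1 t.2.2.2.2).unit

lemma auxF_coe (t : AuxT ℓ k) :
    (auxF ℓ k D t : Matrix (Fin 2) (Fin 2) (InertRing ℓ k D))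
      = auxMat ℓ k D t.1 t.2.1 t.2.2.1 t.2.2.2.1 t.2.2.2.2 :=
  IsUnit.unit_spec _

lemma auxF_inj [Nontrivial (ZMod (ℓ^k))] (hℓ : 0 < ℓ) (hk : 1 ≤ k) :
    Function.Injective (auxF ℓ k D) := by
  intro t t' h
  obtain ⟨u, a₀, a₁, bp, cp⟩ := t
  obtain ⟨u', a₀', a₁', bp', cp'⟩ := t'
  have hMat : auxMat ℓ k D u a₀ a₁ bp cp = auxMat ℓ k D u' a₀' a₁' bp' cp' := by
    have h2 := congrArg (Units.val) h
    rwa [show Units.val (auxF ℓ k D (u, a₀, a₁, bp, cp)) = _ from auxF_coe ℓ k D _,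
      show Units.val (auxF ℓ k D (u', a₀', a₁', bp', cp')) = _ from auxF_coe ℓ k D _] at h2
  have hdet := congrArg Matrix.det hMat
  rw [auxMat_det, auxMat_det] at hdet
  have hu : u = u' := Units.ext (auxEm_inj ℓ k D hdet)
  have h01 : auxElt ℓ k D bp = auxElt ℓ k D bp' := by
    have := congrArg (fun M : Matrix (Fin 2) (Fin 2) (InertRing ℓ k D) => M 0 1) hMat
    simpa [auxMat] using this
  have h10 : auxElt ℓ k D cp = auxElt ℓ k D cp' := by
    have := congrArg (fun M : Matrix (Fin 2) (Fin 2) (InertRing ℓ k D) => M 1 0) hMat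
    simpa [auxMat] using this
  have h00 : auxElt ℓ k D (↑a₀, auxIota ℓ k a₁) = auxElt ℓ k D (↑a₀', auxIota ℓ k a₁') := by
    have := congrArg (fun M : Matrix (Fin 2) (Fin 2) (InertRing ℓ k D) => M 0 0) hMat
    simpa [auxMat] using this
  have hbp : bp = bp' := auxElt_inj ℓ k D h01
  have hcp : cp = cp' := auxElt_inj ℓ k D h10
  have h00' := auxElt_inj ℓ k D h00
  have ha₀ : a₀ = a₀' := Units.ext (congrArg Prod.fst h00')
  have ha₁ : a₁ = a₁' := auxIota_inj ℓ k hℓ hk (congrArg Prod.snd h00')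
  simp [hu, ha₀, ha₁, hbp, hcp]

end Aux

/-- For any prime `ℓ`, `k ≥ 1` and integer `D`, the set `𝒜_{ℓᵏ}` of
`σ ∈ GL₂(R_k)` whose determinant lies in the image of `(ℤ/ℓᵏℤ)ˣ` has at least
`ℓ^(7k−3)(ℓ−1)²` elements. -/
theorem stmt_16 (ℓ k : ℕ) (hℓ : ℓ.Prime) (hk : 1 ≤ k) (D : ℤ) :
    ℓ ^ (7 * k - 3) * (ℓ - 1) ^ 2 ≤
      Nat.card {σ : GL (Fin 2) (InertRing ℓ k D) |
        ∃ u : (ZMod (ℓ ^ k))ˣ,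
          (σ : Matrix (Fin 2) (Fin 2) (InertRing ℓ k D)).det =
            algebraMap (ZMod (ℓ ^ k)) (InertRing ℓ k D) (u : ZMod (ℓ ^ k))} := by
  haveI : Fact ℓ.Prime := ⟨hℓ⟩
  have hN1 : 1 < ℓ ^ k := Nat.one_lt_pow (by omega) hℓ.one_lt
  haveI : NeZero (ℓ ^ k) := ⟨by positivity⟩
  haveI : Fact (1 < ℓ ^ k) := ⟨hN1⟩
  have hm : ((X : (ZMod (ℓ^k))[X])^2 - C (D : ZMod (ℓ^k))).Monic :=
    monic_X_pow_sub_C _ two_ne_zero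
  haveI : Finite (InertRing ℓ k D) := by
    have pb := AdjoinRoot.powerBasis' hm
    exact Finite.of_equiv _ pb.basis.equivFun.toEquiv.symm
  set S : Set (GL (Fin 2) (InertRing ℓ k D)) :=
    {σ : GL (Fin 2) (InertRing ℓ k D) |
      ∃ u : (ZMod (ℓ ^ k))ˣ,
        (σ : Matrix (Fin 2) (Fin 2) (InertRing ℓ k D)).det =
          algebraMap (ZMod (ℓ ^ k)) (InertRing ℓ k D) (u : ZMod (ℓ ^ k))} with hS
  have hmem : ∀ t : AuxT ℓ k, auxF ℓ k D t ∈ S := by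
    intro t
    refine ⟨t.1, ?_⟩
    rw [auxF_coe, auxMat_det]
  have hF : Function.Injective (fun t : AuxT ℓ k => (⟨auxF ℓ k D t, hmem t⟩ : ↥S)) := by
    intro t t' h
    exact auxF_inj ℓ k D hℓ.pos hk (congrArg Subtype.val h)
  have hle : Nat.card (AuxT ℓ k) ≤ Nat.card ↥S :=
    Nat.card_le_card_of_injective _ hF
  have hu : Nat.card (ZMod (ℓ^k))ˣ = ℓ^(k-1) * (ℓ-1) := by
    rw [Nat.card_eq_fintype_card, ZMod.card_units_eq_totient,
      Nat.totient_prime_pow hℓ (by omega)]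
  have hcard : Nat.card (AuxT ℓ k) = ℓ ^ (7 * k - 3) * (ℓ - 1) ^ 2 := by
    simp only [AuxT, Nat.card_prod, hu, Nat.card_zmod]
    rw [show 7 * k - 3 = (k-1) + ((k-1) + ((k-1) + (k + k + (k + k)))) from by omega]
    simp only [pow_add]
    ring
  rw [← hcard]
  exact hle
end
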